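/- arXiv:2012.05554 — 9 statements merged into one kernel-verified Lean document; each statement's English description precedes it below -/
import Mathlib

section
/- For every rooted tree T and every vertex v of T, if a connected graph G is a spanning subgraph of the closure of T, then there exists a rooted tree T' of the same vertex set with depth at most the depth of T such that G is a subgraph of the closure of T' and for every vertex v of T', the subgraph of G induced by v together with all descendants of v in T' is connected. -/
/-- A rooted tree on vertex set `V`, encoded by its ancestor order:
a partial order with a minimum element (the root) in which the set of
ancestors of any vertex is a chain. -/
structure TreeOrder (V : Type*) where
  le : V → V → Prop
  refl : ∀ v, le v v
  antisymm : ∀ u v, le u v → le v u → u = v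
  trans : ∀ u v w, le u v → le v w → le u w
  root : V
  root_le : ∀ v, le root v
  downChain : ∀ u v w, le u w → le v w → le u v ∨ le v u

/-- The depth of the rooted tree (maximum number of vertices on a
root--to--leaf path) is at most `d`: every chain has at most `d` vertices. -/
def TreeOrder.depthLE {V : Type*} (T : TreeOrder V) (d : ℕ) : Prop :=
  ∀ s : Finset V, (∀ u ∈ s, ∀ v ∈ s, T.le u v ∨ T.le v u) → s.card ≤ d

/-- `G` is a (spanning) subgraph of the closure of the rooted tree `T`:
every edge of `G` joins an ancestor-descendant pair of `T`. -/
def subClosure {V : Type*} (G : SimpleGraph V) (T : TreeOrder V) : Prop :=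
  ∀ u v, G.Adj u v → T.le u v ∨ T.le v u

section Aux

variable {V : Type*} (G : SimpleGraph V) (T : TreeOrder V)

/-- One step of a walk in `G` staying inside the `T`-up-set of `v`. -/
def stepRel (v a b : V) : Prop := G.Adj a b ∧ T.le v b

/-- The new ancestor order: `w` is reachable from `v` within the up-set of `v`. -/
def newLe (v w : V) : Prop := Relation.ReflTransGen (stepRel G T v) v w

variable {G T}

lemma newLe_le {v w : V} (h : newLe G T v w) : T.le v w := by
  induction h with
  | refl => exact T.refl v
  | tail _ step _ => exact step.2

lemma rtg_mono {u v a w : V} (huv : T.le u v)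
    (h : Relation.ReflTransGen (stepRel G T v) a w) :
    Relation.ReflTransGen (stepRel G T u) a w := by
  induction h with
  | refl => exact .refl
  | tail _ step ih => exact ih.tail ⟨step.1, T.trans _ _ _ huv step.2⟩

lemma rtg_le {u a b : V} (ha : T.le u a)
    (h : Relation.ReflTransGen (stepRel G T u) a b) : T.le u b := by
  induction h with
  | refl => exact ha
  | tail _ step _ => exact step.2

lemma rtg_rev {u a b : V} (ha : T.le u a)
    (h : Relation.ReflTransGen (stepRel G T u) a b) :
    Relation.ReflTransGen (stepRel G T u) b a := by
  induction h with
  | refl => exact .refl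
  | tail h step ih =>
    exact Relation.ReflTransGen.trans
      (Relation.ReflTransGen.single ⟨step.1.symm, rtg_le ha h⟩) ih

lemma newLe_trans {u v w : V} (h1 : newLe G T u v) (h2 : newLe G T v w) :
    newLe G T u w :=
  Relation.ReflTransGen.trans h1 (rtg_mono (newLe_le h1) h2)

end Aux

theorem stmt0 {V : Type*} (G : SimpleGraph V) (T : TreeOrder V)
    (hG : G.Connected) (hsub : subClosure G T) :
    ∃ T' : TreeOrder V,
      (∀ d : ℕ, T.depthLE d → T'.depthLE d) ∧
      subClosure G T' ∧
      ∀ v : V, (G.induce {w | T'.le v w}).Connected := by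
  classical
  refine ⟨{
    le := newLe G T
    refl := fun v => Relation.ReflTransGen.refl
    antisymm := fun u v h1 h2 => T.antisymm u v (newLe_le h1) (newLe_le h2)
    trans := fun u v w h1 h2 => newLe_trans h1 h2
    root := T.root
    root_le := ?_
    downChain := ?_ }, ?_, ?_, ?_⟩
  · -- root_le
    intro v
    have h : Relation.ReflTransGen G.Adj T.root v :=
      (G.reachable_iff_reflTransGen T.root v).mp (hG.preconnected T.root v)
    exact Relation.ReflTransGen.mono (p := stepRel G T T.root) (fun a b hab => ⟨hab, T.root_le b⟩) _ _ h
  · -- downChain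
    intro u v w hu hv
    rcases T.downChain u v w (newLe_le hu) (newLe_le hv) with h | h
    · left
      exact Relation.ReflTransGen.trans hu
        (rtg_rev h (rtg_mono h hv))
    · right
      exact Relation.ReflTransGen.trans hv
        (rtg_rev h (rtg_mono h hu))
  · -- depth
    intro d hd s hs
    apply hd s
    intro a ha b hb
    rcases hs a ha b hb with h | h
    · exact Or.inl (newLe_le h)
    · exact Or.inr (newLe_le h)
  · -- subClosure
    intro a b hab
    rcases hsub a b hab with h | h
    · exact Or.inl (Relation.ReflTransGen.single ⟨hab, h⟩)
    · exact Or.inr (Relation.ReflTransGen.single ⟨hab.symm, h⟩)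
  · -- connectivity
    intro v
    have key : ∀ a b, Relation.ReflTransGen (stepRel G T v) a b →
        ∀ (ha : newLe G T v a) (hb : newLe G T v b),
        (G.induce {x | newLe G T v x}).Reachable ⟨a, ha⟩ ⟨b, hb⟩ := by
      intro a b h
      induction h with
      | refl => intro ha hb; exact SimpleGraph.Reachable.refl _
      | tail h step ih =>
        intro ha hc
        have hb : newLe G T v _ := Relation.ReflTransGen.trans ha h
        have hadj : (G.induce {x | newLe G T v x}).Adj ⟨_, hb⟩ ⟨_, hc⟩ := step.1
        exact (ih ha hb).trans hadj.reachable
    show (G.induce {x | newLe G T v x}).Connected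
    haveI : Nonempty {x | newLe G T v x} := ⟨⟨v, Relation.ReflTransGen.refl⟩⟩
    refine ⟨fun a b => ?_⟩
    obtain ⟨a, ha⟩ := a
    obtain ⟨b, hb⟩ := b
    have h1 := key v a ha Relation.ReflTransGen.refl ha
    have h2 := key v b hb Relation.ReflTransGen.refl hb
    exact h1.symm.trans h2
end

section
/- For every integer w ≥ 1, every graph with pathwidth at most w has a vertex 2-colouring such that every monochromatic path has at most (w+3)^w vertices. -/
/-- `(B 0, …, B (n-1))` is a path-decomposition of `G`: each vertex lies in a
nonempty interval of bags and each edge lies in a common bag. -/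
def PathDecomp {V : Type*} (G : SimpleGraph V) (n : ℕ) (B : Fin n → Finset V) : Prop :=
  (∀ v : V, ∃ i, v ∈ B i) ∧
  (∀ v : V, ∀ i j k : Fin n, i ≤ j → j ≤ k → v ∈ B i → v ∈ B k → v ∈ B j) ∧
  (∀ u v : V, G.Adj u v → ∃ i, u ∈ B i ∧ v ∈ B i)

/-- `G` has pathwidth at most `w`. -/
def pathwidthLE {V : Type*} (G : SimpleGraph V) (w : ℕ) : Prop :=
  ∃ (n : ℕ) (B : Fin n → Finset V), PathDecomp G n B ∧ ∀ i, (B i).card ≤ w + 1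

namespace MonoPathAux

open List

def g : ℕ → ℕ
  | 0 => 1
  | 1 => 4
  | (n+2) => (n+4) * g (n+1) + (n+3)

lemma g_zero : g 0 = 1 := rfl
lemma g_one : g 1 = 4 := rfl
lemma g_two (n : ℕ) : g (n+2) = (n+4) * g (n+1) + (n+3) := rfl

lemma g_le_succ (n : ℕ) : g n ≤ g (n+1) := by
  cases n with
  | zero => simp [g_zero, g_one]
  | succ m =>
    rw [g_two]
    calc g (m+1) ≤ (m+4) * g (m+1) := Nat.le_mul_of_pos_left _ (by omega)
      _ ≤ (m+4) * g (m+1) + (m+3) := Nat.le_add_right _ _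

lemma g_le (w : ℕ) (hw : 1 ≤ w) : g w ≤ (w+3)^w := by
  induction w with
  | zero => omega
  | succ n ih =>
    cases n with
    | zero => simp [g_one]
    | succ m =>
      have ihh := ih (by omega)
      have h2 : m + 3 ≤ (m+4)^(m+1) :=
        le_trans (by omega) (Nat.le_self_pow (by omega) _)
      calc g (m+2) = (m+4) * g (m+1) + (m+3) := rfl
        _ ≤ (m+4) * (m+1+3)^(m+1) + (m+3) := by gcongr
        _ = (m+4)^(m+2) + (m+3) := by ring_nf
        _ ≤ (m+4)^(m+2) + (m+4)^(m+1) := by omega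
        _ = (m+4)^(m+1) * (m+5) := by ring
        _ ≤ (m+5)^(m+1) * (m+5) := by gcongr; omega
        _ = (m+2+3)^(m+2) := by ring_nf

variable {V : Type*} (G : SimpleGraph V)

lemma two_in_one {X : Set V} (hX : X.Finite) (hle : X.ncard ≤ 1) {a b : V}
    (ha : a ∈ X) (hb : b ∈ X) (hne : a ≠ b) : False := by
  have hsub : ({a, b} : Set V) ⊆ X := by
    intro x hx; rcases hx with rfl | hx
    · exact ha
    · simp at hx; subst hx; exact hb
  have := Set.ncard_le_ncard hsub hX
  rw [Set.ncard_pair hne] at this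
  omega

lemma three_in_two {X : Set V} (hX : X.Finite) (hle : X.ncard ≤ 2) {a b c : V}
    (ha : a ∈ X) (hb : b ∈ X) (hc : c ∈ X)
    (hab : a ≠ b) (hac : a ≠ c) (hbc : b ≠ c) : False := by
  have hsub : ({a, b, c} : Set V) ⊆ X := by
    intro x hx
    rcases hx with rfl | rfl | hx
    · exact ha
    · exact hb
    · simp at hx; subst hx; exact hc
  have hcard : ({a, b, c} : Set V).ncard = 3 := by
    rw [Set.ncard_insert_of_notMem (by simp [hab, hac]) (by
      exact (Set.finite_singleton c).insert b), Set.ncard_pair hbc]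
  have := Set.ncard_le_ncard hsub hX
  omega

lemma list_len_le_ncard {X : Set V} (hX : X.Finite) (L : List V) (hn : L.Nodup)
    (hsub : ∀ x ∈ L, x ∈ X) : L.length ≤ X.ncard := by
  classical
  calc L.length = L.toFinset.card := (List.toFinset_card_of_nodup hn).symm
    _ = (↑L.toFinset : Set V).ncard := (Set.ncard_coe_finset _).symm
    _ ≤ X.ncard := Set.ncard_le_ncard (by intro x hx; simp at hx; exact hsub x hx) hX

lemma core (w : ℕ) : ∀ (A : Set V), A.Finite → ∀ (l r : V → ℕ),
    (∀ v ∈ A, l v ≤ r v) →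
    (∀ u ∈ A, ∀ v ∈ A, G.Adj u v → l u ≤ r v ∧ l v ≤ r u) →
    (∀ i : ℕ, {v | v ∈ A ∧ l v ≤ i ∧ i ≤ r v}.ncard ≤ w + 1) →
    ∃ f : V → Fin 2,
      ∀ L : List V, L.Chain' G.Adj → L.Nodup → (∀ x ∈ L, x ∈ A) →
        (∀ x ∈ L, ∀ y ∈ L, f x = f y) → L.length ≤ g w := by
  classical
  induction w with
  | zero =>
    intro A hAfin l r hlr hadj hcov
    refine ⟨fun _ => 0, ?_⟩
    intro L hchain hnodup hsub _
    match L, hchain, hnodup with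
    | [], _, _ => simp [g]
    | [a], _, _ => simp [g]
    | (a :: b :: t), hchain, hnodup =>
      exfalso
      have hab : G.Adj a b := (List.isChain_cons_cons.mp hchain).1
      have haA : a ∈ A := hsub a (by simp)
      have hbA : b ∈ A := hsub b (by simp)
      have hne : a ≠ b := by
        intro h; exact (G.irrefl (h ▸ hab))
      have hint := hadj a haA b hbA hab
      set j := max (l a) (l b) with hj
      have hfin : {v | v ∈ A ∧ l v ≤ j ∧ j ≤ r v}.Finite :=
        hAfin.subset (fun x hx => hx.1)
      refine two_in_one hfin (hcov j) ?_ ?_ hne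
      · exact ⟨haA, le_max_left _ _, by have := hlr a haA; omega⟩
      · exact ⟨hbA, le_max_right _ _, by have := hlr b hbA; omega⟩
  | succ W IH =>
    intro A hAfin l r hlr hadj hcov
    set C : ℕ → Set V := fun i => {v | v ∈ A ∧ l v ≤ i ∧ i ≤ r v} with hC
    have hCfin : ∀ i, (C i).Finite := fun i => hAfin.subset (fun x hx => hx.1)
    obtain ⟨N, hN⟩ : ∃ N, ∀ v ∈ A, r v ≤ N := by
      rcases Set.Finite.bddAbove (hAfin.image r) with ⟨N, hN⟩
      exact ⟨N, fun v hv => hN ⟨v, hv, rfl⟩⟩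
    have hex : ∀ j : ℕ, ∃ i, j < i ∧ ∀ v, v ∈ C j → v ∈ C i → False := by
      intro j
      refine ⟨max j N + 1, by omega, ?_⟩
      intro v _ hvi
      have h1 := hvi.1
      have h2 := hN v hvi.1
      have := hvi.2.2
      omega
    set m : ℕ → ℕ := fun k => Nat.rec 0 (fun _ prev => Nat.find (hex prev)) k with hm
    have hmsucc : ∀ k, m (k+1) = Nat.find (hex (m k)) := fun k => rfl
    have hmlt : ∀ k, m k < m (k+1) := fun k => (Nat.find_spec (hex (m k))).1
    have hmdisj : ∀ k v, v ∈ C (m k) → v ∈ C (m (k+1)) → False :=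
      fun k => (Nat.find_spec (hex (m k))).2
    have hmmin : ∀ k i, m k < i → i < m (k+1) → ∃ v, v ∈ C (m k) ∧ v ∈ C i := by
      intro k i h1 h2
      rw [hmsucc k] at h2
      have := Nat.find_min (hex (m k)) h2
      push_neg at this
      obtain ⟨v, hv1, hv2⟩ := this h1
      exact ⟨v, hv1, hv2.1⟩
    have hmono : StrictMono m := strictMono_nat_of_lt_succ hmlt
    have hmge : ∀ k, k ≤ m k := by
      intro k; induction k with
      | zero => omega
      | succ n ihn => have := hmlt n; omega
    -- S and groups
    set S : Set V := {v | v ∈ A ∧ ∃ k, l v ≤ m k ∧ m k ≤ r v} with hS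
    have cover_unique : ∀ v ∈ A, ∀ k k', (l v ≤ m k ∧ m k ≤ r v) →
        (l v ≤ m k' ∧ m k' ≤ r v) → k = k' := by
      have key : ∀ v ∈ A, ∀ k k', k < k' → (l v ≤ m k ∧ m k ≤ r v) →
          (l v ≤ m k' ∧ m k' ≤ r v) → False := by
        intro v hv k k' hkk h1 h2
        have hle : m (k+1) ≤ m k' := hmono.monotone hkk
        refine hmdisj k v ⟨hv, h1.1, h1.2⟩ ⟨hv, ?_, ?_⟩
        · have := hmlt k; omega
        · omega
      intro v hv k k' h1 h2
      rcases lt_trichotomy k k' with h | h | h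
      · exact absurd (key v hv k k' h h1 h2) (by simp)
      · exact h
      · exact absurd (key v hv k' k h h2 h1) (by simp)
    set grp : V → ℕ := fun v =>
      if h : ∃ k, l v ≤ m k ∧ m k ≤ r v then Nat.find h else 0 with hgrpdef
    have hgrp : ∀ v ∈ S, l v ≤ m (grp v) ∧ m (grp v) ≤ r v := by
      intro v hv
      rcases hv.2 with ⟨k, hk⟩
      have h : ∃ k, l v ≤ m k ∧ m k ≤ r v := ⟨k, hk⟩
      simp only [hgrpdef, dif_pos h]
      exact Nat.find_spec h
    have hgrp_eq : ∀ v ∈ A, ∀ k, (l v ≤ m k ∧ m k ≤ r v) → grp v = k := by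
      intro v hv k hk
      have hvS : v ∈ S := ⟨hv, k, hk⟩
      exact cover_unique v hv (grp v) k (hgrp v hvS) hk
    -- chunk coverage
    have hcov' : ∀ i : ℕ, {v | v ∈ A \ S ∧ l v ≤ i ∧ i ≤ r v}.ncard ≤ W + 1 := by
      intro i
      by_cases hne : {v | v ∈ A \ S ∧ l v ≤ i ∧ i ≤ r v} = ∅
      · rw [hne]; simp
      · obtain ⟨v₀, hv₀⟩ := Set.nonempty_iff_ne_empty.mpr hne
        have hv₀A : v₀ ∈ A := hv₀.1.1
        have hv₀S : v₀ ∉ S := hv₀.1.2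
        have hnotmil : ∀ k, i ≠ m k := by
          intro k hk
          exact hv₀S ⟨hv₀A, k, by rw [← hk]; exact ⟨hv₀.2.1, hv₀.2.2⟩⟩
        have hm0 : m 0 = 0 := rfl
        have hi1 : 1 ≤ i := by
          rcases Nat.eq_zero_or_pos i with rfl | h
          · exact absurd hm0.symm (hnotmil 0)
          · exact h
        set k₀ := Nat.findGreatest (fun k => m k < i) i with hk₀
        have hP0 : m 0 < i := by omega
        have hspec : m k₀ < i :=
          Nat.findGreatest_spec (P := fun k => m k < i) (Nat.zero_le i) hP0
        have hk₀lt : k₀ < i := by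
          by_contra h
          have : i ≤ k₀ := by omega
          have := hmge k₀
          omega
        have hnext : i < m (k₀ + 1) := by
          have hng : ¬ (m (k₀ + 1) < i) := by
            apply Nat.findGreatest_is_greatest (n := i) (k := k₀ + 1) (P := fun k => m k < i)
            · omega
            · omega
          have := hnotmil (k₀ + 1)
          omega
        obtain ⟨u, hu1, hu2⟩ := hmmin k₀ i hspec hnext
        have huS : u ∈ S := ⟨hu1.1, k₀, hu1.2⟩
        have hsub2 : {v | v ∈ A \ S ∧ l v ≤ i ∧ i ≤ r v} ⊆ C i \ {u} := by
          intro x hx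
          refine ⟨⟨hx.1.1, hx.2⟩, ?_⟩
          intro hxu
          simp only [Set.mem_singleton_iff] at hxu
          exact hx.1.2 (hxu ▸ huS)
        have h1 : (C i \ {u}).ncard = (C i).ncard - 1 :=
          Set.ncard_diff_singleton_of_mem hu2
        have h2 := Set.ncard_le_ncard hsub2 ((hCfin i).diff)
        have h4 : 0 < (C i).ncard := (Set.ncard_pos (hCfin i)).mpr ⟨u, hu2⟩
        have h3 : (C i).ncard ≤ W + 2 := hcov i
        rw [h1] at h2
        omega
    -- IH application
    obtain ⟨fc, hfc⟩ := IH (A \ S) (hAfin.subset Set.diff_subset) l r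
      (fun v hv => hlr v hv.1)
      (fun u hu v hv huv => hadj u hu.1 v hv.1 huv)
      hcov'
    set f : V → Fin 2 := fun v =>
      if v ∈ S then (⟨grp v % 2, Nat.mod_lt _ (by omega)⟩ : Fin 2) else fc v with hf
    refine ⟨f, ?_⟩
    intro L hchain hnodup hsub hmonoL
    have run_bound : ∀ L' : List V, L'.Chain' G.Adj → L'.Nodup →
        (∀ x ∈ L', x ∈ A ∧ x ∉ S) → (∀ x ∈ L', ∀ y ∈ L', f x = f y) →
        L'.length ≤ g W := by
      intro L' hc hn hs hm'
      refine hfc L' hc hn (fun x hx => ⟨(hs x hx).1, (hs x hx).2⟩) ?_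
      intro x hx y hy
      have h2 := hm' x hx y hy
      simp only [hf] at h2
      rw [if_neg (hs x hx).2, if_neg (hs y hy).2] at h2
      exact h2
    by_cases hLS : ∃ x ∈ L, x ∈ S
    case neg =>
      push_neg at hLS
      have := run_bound L hchain hnodup (fun x hx => ⟨hsub x hx, hLS x hx⟩) hmonoL
      have hgs : g W ≤ g (W+1) := g_le_succ W
      omega
    obtain ⟨s0, hs0L, hs0S⟩ := hLS
    set k0 := grp s0 with hk0
    have hparity : ∀ x ∈ L, x ∈ S → grp x % 2 = k0 % 2 := by
      intro x hx hxS
      have h2 := hmonoL x hx s0 hs0L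
      simp only [hf] at h2
      rw [if_pos hxS, if_pos hs0S] at h2
      exact congrArg Fin.val h2
    have cross : ∀ (M : ℕ) (L' : List V), L'.Chain' G.Adj → (∀ x ∈ L', x ∈ A) →
        (∀ x ∈ L', ¬(l x ≤ M ∧ M ≤ r x)) →
        (∀ x ∈ L', r x < M) ∨ (∀ x ∈ L', M < l x) := by
      intro M L'
      induction L' with
      | nil => intro _ _ _; left; intro x hx; simp at hx
      | cons a t iht =>
        intro hch hA' hno
        have haA : a ∈ A := hA' a (by simp)
        have ha : r a < M ∨ M < l a := by
          have h1 := hno a (by simp)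
          have h2 := hlr a haA
          omega
        cases t with
        | nil =>
          rcases ha with h | h
          · left; intro x hx; simp at hx; subst hx; exact h
          · right; intro x hx; simp at hx; subst hx; exact h
        | cons b t2 =>
          have hab : G.Adj a b := (List.isChain_cons_cons.mp hch).1
          have hbA : b ∈ A := hA' b (by simp)
          have hint := hadj a haA b hbA hab
          have ht := iht (List.isChain_cons_cons.mp hch).2
            (fun x hx => hA' x (List.mem_cons_of_mem _ hx))
            (fun x hx => hno x (List.mem_cons_of_mem _ hx))
          have hbmem : b ∈ b :: t2 := by simp
          rcases ht with hL | hR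
          · left
            intro x hx
            rcases List.mem_cons.mp hx with rfl | hx'
            · have := hL b hbmem; omega
            · exact hL x hx'
          · right
            intro x hx
            rcases List.mem_cons.mp hx with rfl | hx'
            · have := hR b hbmem; omega
            · exact hR x hx'
    have claim2 : ∀ x1, x1 ∈ L → ∀ x2, x2 ∈ L → x1 ∈ S → x2 ∈ S →
        grp x1 < grp x2 → False := by
      intro x1 h1 x2 h2 hS1 hS2 hlt12
      have hpar : grp x1 % 2 = grp x2 % 2 := by
        rw [hparity x1 h1 hS1, hparity x2 h2 hS2]
      have hk : grp x1 + 1 < grp x2 := by omega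
      have hnoM : ∀ y ∈ L, ¬(l y ≤ m (grp x1 + 1) ∧ m (grp x1 + 1) ≤ r y) := by
        intro y hy hcovy
        have hyA := hsub y hy
        have hyS : y ∈ S := ⟨hyA, grp x1 + 1, hcovy⟩
        have hgy : grp y = grp x1 + 1 := hgrp_eq y hyA _ hcovy
        have hp1 := hparity y hy hyS
        have hp2 := hparity x1 h1 hS1
        omega
      have hc1 := hgrp x1 hS1
      have hc2 := hgrp x2 hS2
      rcases cross (m (grp x1 + 1)) L hchain hsub hnoM with hleft | hright
      · have hlt : m (grp x1 + 1) < m (grp x2) := hmono hk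
        have := hleft x2 h2
        omega
      · have := hright x1 h1
        have := hmlt (grp x1)
        omega
    have claimA : ∀ x ∈ L, x ∈ S → grp x = k0 := by
      intro x hx hxS
      rcases lt_trichotomy (grp x) k0 with h | h | h
      · exact absurd (claim2 x hx s0 hs0L hxS hs0S h) not_false
      · exact h
      · exact absurd (claim2 s0 hs0L x hx hs0S hxS h) not_false
    have hcoverk0 : ∀ x ∈ L, x ∈ S → l x ≤ m k0 ∧ m k0 ≤ r x := by
      intro x hx hxS
      have := hgrp x hxS
      rwa [claimA x hx hxS] at this
    have split_first : ∀ L' : List V, (∃ x ∈ L', x ∈ S) →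
        ∃ L1 s L2, L' = L1 ++ s :: L2 ∧ s ∈ S ∧ ∀ y ∈ L1, y ∉ S := by
      intro L' hL'
      induction L' with
      | nil => simp at hL'
      | cons a t ih =>
        by_cases haS : a ∈ S
        · exact ⟨[], a, t, rfl, haS, by simp⟩
        · obtain ⟨x, hx, hxS⟩ := hL'
          have hxt : x ∈ t := by
            rcases List.mem_cons.mp hx with rfl | h
            · exact absurd hxS haS
            · exact h
          obtain ⟨L1, s, L2, heq, hsS, hL1⟩ := ih ⟨x, hxt, hxS⟩
          refine ⟨a :: L1, s, L2, by rw [heq]; rfl, hsS, ?_⟩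
          intro y hy
          rcases List.mem_cons.mp hy with rfl | h
          · exact haS
          · exact hL1 y h
    have count : ∀ N, ∀ L' : List V, L'.length ≤ N → L'.Chain' G.Adj → L'.Nodup →
        (∀ x ∈ L', x ∈ A) → (∀ x ∈ L', ∀ y ∈ L', f x = f y) →
        L'.length ≤ (L'.countP (fun x => decide (x ∈ S))) * (g W + 1) + g W := by
      intro N
      induction N with
      | zero =>
        intro L' hlen _ _ _ _
        omega
      | succ N ihN =>
        intro L' hlen hc hn hs hm'
        by_cases hex' : ∃ x ∈ L', x ∈ S
        · obtain ⟨L1, s, L2, rfl, hsS, hL1⟩ := split_first L' hex'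
          have hsplit := List.isChain_append.mp hc
          have hc1 : L1.Chain' G.Adj := hsplit.1
          have hcL2 : L2.Chain' G.Adj := (hsplit.2.1).tail
          have hsubl1 : L1 <+ L1 ++ s :: L2 := (List.prefix_append L1 (s :: L2)).sublist
          have hsubl2 : L2 <+ L1 ++ s :: L2 :=
            (List.sublist_cons_self s L2).trans (List.sublist_append_right L1 (s :: L2))
          have hn1 : L1.Nodup := hn.sublist hsubl1
          have hn2 : L2.Nodup := hn.sublist hsubl2
          have hlen1 : L1.length ≤ g W := run_bound L1 hc1 hn1
            (fun x hx => ⟨hs x (hsubl1.subset hx), hL1 x hx⟩)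
            (fun x hx y hy => hm' x (hsubl1.subset hx) y (hsubl1.subset hy))
          have hlenL : (L1 ++ s :: L2).length = L1.length + 1 + L2.length := by
            simp [List.length_append]
            omega
          have hlen2 : L2.length ≤ L2.countP (fun x => decide (x ∈ S)) * (g W + 1) + g W := by
            apply ihN L2 _ hcL2 hn2 (fun x hx => hs x (hsubl2.subset hx))
              (fun x hx y hy => hm' x (hsubl2.subset hx) y (hsubl2.subset hy))
            rw [hlenL] at hlen
            omega
          have hcnt : (L1 ++ s :: L2).countP (fun x => decide (x ∈ S)) =
              L2.countP (fun x => decide (x ∈ S)) + 1 := by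
            rw [List.countP_append, List.countP_cons_of_pos (by simpa using hsS),
              List.countP_eq_zero.mpr (by intro a ha; simpa using hL1 a ha)]
            omega
          rw [hcnt, hlenL, add_mul, one_mul]
          generalize hQ : L2.countP (fun x => decide (x ∈ S)) * (g W + 1) = Q at hlen2 ⊢
          omega
        · push_neg at hex'
          have h0 : L'.countP (fun x => decide (x ∈ S)) = 0 :=
            List.countP_eq_zero.mpr (by intro a ha; simpa using hex' a ha)
          rw [h0]
          have := run_bound L' hc hn (fun x hx => ⟨hs x hx, hex' x hx⟩) hm'
          omega
    have hcnt_le : L.countP (fun x => decide (x ∈ S)) ≤ W + 2 := by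
      set LF := L.filter (fun x => decide (x ∈ S)) with hLF
      have h1 : L.countP (fun x => decide (x ∈ S)) = LF.length :=
        List.countP_eq_length_filter
      have h2 : LF.Nodup := hnodup.filter _
      have h3 : ∀ x ∈ LF, x ∈ C (m k0) := by
        intro x hx
        have hxL : x ∈ L := List.mem_of_mem_filter hx
        have hxS : x ∈ S := by
          have := List.of_mem_filter hx
          simpa using this
        exact ⟨hsub x hxL, hcoverk0 x hxL hxS⟩
      have h5 := list_len_le_ncard (hCfin (m k0)) LF h2 h3
      have h4 : (C (m k0)).ncard ≤ W + 2 := hcov (m k0)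
      omega
    cases W with
    | succ W' =>
      have hb := count L.length L le_rfl hchain hnodup hsub hmonoL
      have hgval : g (W' + 2) = (W' + 3) * (g (W' + 1) + 1) + g (W' + 1) := by
        rw [g_two]; ring
      rw [hgval]
      have h5 : L.countP (fun x => decide (x ∈ S)) * (g (W' + 1) + 1) ≤
          (W' + 3) * (g (W' + 1) + 1) :=
        Nat.mul_le_mul_right _ (by omega)
      generalize hQ1 : L.countP (fun x => decide (x ∈ S)) * (g (W' + 1) + 1) = Q1 at hb h5
      generalize hQ2 : (W' + 3) * (g (W' + 1) + 1) = Q2 at h5 ⊢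
      omega
    | zero =>
      have hg1 : g (0 + 1) = 4 := rfl
      rw [hg1]
      -- no chunk-chunk edges
      have hcc : ∀ u v : V, u ∈ A → v ∈ A → u ∉ S → v ∉ S → G.Adj u v → False := by
        intro u v huA hvA huS hvS huv
        have hne : u ≠ v := G.ne_of_adj huv
        have hint := hadj u huA v hvA huv
        have hulr := hlr u huA
        have hvlr := hlr v hvA
        set j := max (l u) (l v) with hj
        have hfin : {x | x ∈ A \ S ∧ l x ≤ j ∧ j ≤ r x}.Finite :=
          hAfin.subset (fun x hx => hx.1.1)
        refine two_in_one hfin (hcov' j) ?_ ?_ hne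
        · exact ⟨⟨huA, huS⟩, le_max_left _ _, by omega⟩
        · exact ⟨⟨hvA, hvS⟩, le_max_right _ _, by omega⟩
      -- no common chunk neighbour of two group vertices
      have hcnb : ∀ s1 s2 y : V, s1 ∈ A → s2 ∈ A → y ∈ A → s1 ≠ s2 → y ∉ S →
          (l s1 ≤ m k0 ∧ m k0 ≤ r s1) → (l s2 ≤ m k0 ∧ m k0 ≤ r s2) →
          G.Adj y s1 → G.Adj y s2 → False := by
        intro s1 s2 y h1A h2A hyA hne hyS hcv1 hcv2 hy1 hy2
        have hi1 := hadj y hyA s1 h1A hy1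
        have hi2 := hadj y hyA s2 h2A hy2
        have hs1S : s1 ∈ S := ⟨h1A, k0, hcv1⟩
        have hs2S : s2 ∈ S := ⟨h2A, k0, hcv2⟩
        have hys1 : y ≠ s1 := fun h => hyS (h ▸ hs1S)
        have hys2 : y ≠ s2 := fun h => hyS (h ▸ hs2S)
        have hylr := hlr y hyA
        have h1lr := hlr s1 h1A
        have h2lr := hlr s2 h2A
        set j1 := max (l y) (l s1) with hj1
        set j2 := max (l y) (l s2) with hj2
        have hmem11 : y ∈ C j1 := ⟨hyA, le_max_left _ _, by omega⟩
        have hmem12 : s1 ∈ C j1 := ⟨h1A, le_max_right _ _, by omega⟩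
        have hmem21 : y ∈ C j2 := ⟨hyA, le_max_left _ _, by omega⟩
        have hmem22 : s2 ∈ C j2 := ⟨h2A, le_max_right _ _, by omega⟩
        have h3 : ∀ j : ℕ, s2 ∈ C j → y ∈ C j → s1 ∈ C j → False := by
          intro j ha' hb' hc'
          exact three_in_two (hCfin j) (hcov j) hb' hc' ha' hys1 hys2 hne
        have hn1' : ¬ (l s2 ≤ j1 ∧ j1 ≤ r s2) := by
          intro h
          exact h3 j1 ⟨h2A, h⟩ hmem11 hmem12
        have hn2' : ¬ (l s1 ≤ j2 ∧ j2 ≤ r s1) := by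
          intro h
          exact h3 j2 hmem22 hmem21 ⟨h1A, h⟩
        have hyN : ¬ (l y ≤ m k0 ∧ m k0 ≤ r y) := fun h => hyS ⟨hyA, k0, h⟩
        omega
      by_contra hcon
      push_neg at hcon
      rcases L with _ | ⟨a, _ | ⟨b, _ | ⟨c, _ | ⟨d, _ | ⟨e, t⟩⟩⟩⟩⟩
      · simp at hcon
      · simp at hcon
      · simp at hcon
      · simp at hcon
      · simp at hcon
      · -- L = a :: b :: c :: d :: e :: t
        obtain ⟨hab, hchain1⟩ := List.isChain_cons_cons.mp hchain
        obtain ⟨hbc, hchain2⟩ := List.isChain_cons_cons.mp hchain1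
        obtain ⟨hcd, hchain3⟩ := List.isChain_cons_cons.mp hchain2
        obtain ⟨hde, _⟩ := List.isChain_cons_cons.mp hchain3
        have haL : a ∈ a :: b :: c :: d :: e :: t := by simp
        have hbL : b ∈ a :: b :: c :: d :: e :: t := by simp
        have hcL : c ∈ a :: b :: c :: d :: e :: t := by simp
        have hdL : d ∈ a :: b :: c :: d :: e :: t := by simp
        have heL : e ∈ a :: b :: c :: d :: e :: t := by simp
        have haA := hsub a haL
        have hbA := hsub b hbL
        have hcA := hsub c hcL
        have hdA := hsub d hdL
        have heA := hsub e heL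
        simp only [List.nodup_cons, List.mem_cons, not_or] at hnodup
        obtain ⟨⟨hab', hac', had', hae', -⟩,
          ⟨hbc', hbd', hbe', -⟩, ⟨hcd', hce', -⟩, ⟨hde', -⟩, -⟩ := hnodup
        have trip : ∀ x y z : V, x ∈ a :: b :: c :: d :: e :: t →
            y ∈ a :: b :: c :: d :: e :: t → z ∈ a :: b :: c :: d :: e :: t →
            x ≠ y → x ≠ z → y ≠ z → x ∈ S → y ∈ S → z ∈ S → False := by
          intro x y z hx hy hz hxy hxz hyz hxS hyS hzS
          refine three_in_two (hCfin (m k0)) (hcov (m k0))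
            ⟨hsub x hx, hcoverk0 x hx hxS⟩ ⟨hsub y hy, hcoverk0 y hy hyS⟩
            ⟨hsub z hz, hcoverk0 z hz hzS⟩ hxy hxz hyz
        have hedgeS : ∀ x y : V, x ∈ a :: b :: c :: d :: e :: t →
            y ∈ a :: b :: c :: d :: e :: t → G.Adj x y → x ∈ S ∨ y ∈ S := by
          intro x y hx hy hxy
          by_contra h
          push_neg at h
          exact hcc x y (hsub x hx) (hsub y hy) h.1 h.2 hxy
        by_cases hB : b ∈ S
        · by_cases hD : d ∈ S
          · by_cases hC : c ∈ S
            · exact trip b c d hbL hcL hdL hbc' hbd' hcd' hB hC hD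
            · exact hcnb b d c hbA hdA hcA hbd' hC
                (hcoverk0 b hbL hB) (hcoverk0 d hdL hD) hbc.symm hcd
          · have hC : c ∈ S := by
              rcases hedgeS c d hcL hdL hcd with h | h
              · exact h
              · exact absurd h hD
            have hE : e ∈ S := by
              rcases hedgeS d e hdL heL hde with h | h
              · exact absurd h hD
              · exact h
            exact trip b c e hbL hcL heL hbc' hbe' hce' hB hC hE
        · have hA' : a ∈ S := by
            rcases hedgeS a b haL hbL hab with h | h
            · exact h
            · exact absurd h hB
          have hC : c ∈ S := by
            rcases hedgeS b c hbL hcL hbc with h | h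
            · exact absurd h hB
            · exact h
          by_cases hD : d ∈ S
          · exact trip a c d haL hcL hdL hac' had' hcd' hA' hC hD
          · have hE : e ∈ S := by
              rcases hedgeS d e hdL heL hde with h | h
              · exact absurd h hD
              · exact h
            exact trip a c e haL hcL heL hac' hae' hce' hA' hC hE

end MonoPathAux

theorem stmt2 {V : Type*} (G : SimpleGraph V) (w : ℕ) (hw : 1 ≤ w)
    (hpw : pathwidthLE G w) :
    ∃ f : V → Fin 2,
      ∀ (u v : V) (p : G.Walk u v), p.IsPath →
        (∀ x ∈ p.support, f x = f u) → p.support.length ≤ (w + 3) ^ w := by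
  classical
  obtain ⟨n, B, ⟨hB1, hB2, hB3⟩, hBcard⟩ := hpw
  rcases Nat.eq_zero_or_pos n with rfl | hn
  · have hV : ∀ v : V, False := by
      intro v
      obtain ⟨i, -⟩ := hB1 v
      exact i.elim0
    exact ⟨fun v => (hV v).elim, fun u => (hV u).elim⟩
  · have hne : ∀ v : V, (Finset.univ.filter (fun i : Fin n => v ∈ B i)).Nonempty := by
      intro v
      obtain ⟨i, hi⟩ := hB1 v
      exact ⟨i, by simp [hi]⟩
    set l : V → ℕ := fun v =>
      ((Finset.univ.filter (fun i : Fin n => v ∈ B i)).min' (hne v)).val with hl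
    set r : V → ℕ := fun v =>
      ((Finset.univ.filter (fun i : Fin n => v ∈ B i)).max' (hne v)).val with hr
    have hminmem : ∀ v : V, v ∈ B ((Finset.univ.filter (fun i : Fin n => v ∈ B i)).min' (hne v)) := by
      intro v
      have := Finset.min'_mem _ (hne v)
      simpa using this
    have hmaxmem : ∀ v : V, v ∈ B ((Finset.univ.filter (fun i : Fin n => v ∈ B i)).max' (hne v)) := by
      intro v
      have := Finset.max'_mem _ (hne v)
      simpa using this
    have hmem : ∀ (v : V) (i : Fin n), v ∈ B i ↔ (l v ≤ i.val ∧ i.val ≤ r v) := by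
      intro v i
      constructor
      · intro hvi
        have hifil : i ∈ Finset.univ.filter (fun j : Fin n => v ∈ B j) := by simp [hvi]
        exact ⟨Finset.min'_le _ _ hifil, Finset.le_max' _ _ hifil⟩
      · intro ⟨h1, h2⟩
        exact hB2 v _ i _ h1 h2 (hminmem v) (hmaxmem v)
    have hlrle : ∀ v : V, l v ≤ r v := by
      intro v
      have h := Finset.min'_le (Finset.univ.filter (fun i : Fin n => v ∈ B i)) _
        (Finset.max'_mem _ (hne v))
      exact Fin.le_def.mp h
    have hadj : ∀ u v : V, G.Adj u v → l u ≤ r v ∧ l v ≤ r u := by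
      intro u v huv
      obtain ⟨i, hui, hvi⟩ := hB3 u v huv
      have h1 := (hmem u i).mp hui
      have h2 := (hmem v i).mp hvi
      omega
    have hfinV : (Set.univ : Set V).Finite := by
      apply Set.Finite.subset (Set.finite_iUnion (fun i : Fin n => (B i).finite_toSet))
      intro v _
      obtain ⟨i, hi⟩ := hB1 v
      exact Set.mem_iUnion.mpr ⟨i, hi⟩
    have hcov : ∀ i : ℕ,
        {v : V | v ∈ (Set.univ : Set V) ∧ l v ≤ i ∧ i ≤ r v}.ncard ≤ w + 1 := by
      intro i
      by_cases hin : i < n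
      · have heq : {v : V | v ∈ (Set.univ : Set V) ∧ l v ≤ i ∧ i ≤ r v} =
            ↑(B ⟨i, hin⟩) := by
          ext v
          simp only [Set.mem_setOf_eq, Set.mem_univ, true_and, Finset.mem_coe]
          exact ((hmem v ⟨i, hin⟩)).symm
        rw [heq, Set.ncard_coe_finset]
        exact hBcard _
      · have heq : {v : V | v ∈ (Set.univ : Set V) ∧ l v ≤ i ∧ i ≤ r v} = ∅ := by
          ext v
          simp only [Set.mem_setOf_eq, Set.mem_univ, true_and, Set.mem_empty_iff_false,
            iff_false, not_and]
          intro _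
          have : r v < n := (((Finset.univ.filter (fun j : Fin n => v ∈ B j)).max' (hne v))).isLt
          omega
        rw [heq]
        simp
    obtain ⟨f, hf⟩ := MonoPathAux.core G w Set.univ hfinV l r
      (fun v _ => hlrle v)
      (fun u _ v _ huv => hadj u v huv)
      hcov
    refine ⟨f, ?_⟩
    intro u v p hp hmono
    have h1 := hf p.support p.isChain_adj_support hp.support_nodup
      (fun x _ => Set.mem_univ x)
      (fun x hx y hy => (hmono x hx).trans (hmono y hy).symm)
    exact le_trans h1 (MonoPathAux.g_le w hw)
end

section
/- For every integer w ≥ 1, every graph with pathwidth at most w has a vertex 2-colouring such that each monochromatic connected component has treedepth at most (w+3)^w. -/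
set_option maxHeartbeats 2000000

/-- A rooted forest on vertex set `V`, encoded by its ancestor order:
a partial order in which the set of ancestors of any vertex is a chain. -/
structure ForestOrder (V : Type*) where
  le : V → V → Prop
  refl : ∀ v, le v v
  antisymm : ∀ u v, le u v → le v u → u = v
  trans : ∀ u v w, le u v → le v w → le u w
  downChain : ∀ u v w, le u w → le v w → le u v ∨ le v u

/-- `G` has treedepth at most `d`: `G` is a subgraph of the closure of a rooted
forest on `V(G)` of depth at most `d` (equivalently, every connected component
has a rooted tree of depth at most `d` whose closure contains it). -/
def treedepthLE {V : Type*} (G : SimpleGraph V) (d : ℕ) : Prop :=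
  ∃ F : ForestOrder V,
    (∀ s : Finset V, (∀ u ∈ s, ∀ v ∈ s, F.le u v ∨ F.le v u) → s.card ≤ d) ∧
    ∀ u v, G.Adj u v → F.le u v ∨ F.le v u

open Classical
attribute [local instance 10] Classical.propDecidable

lemma treedepthLE_mono {V : Type*} (G : SimpleGraph V) {d d' : ℕ} (h : d ≤ d') :
    treedepthLE G d → treedepthLE G d' := by
  rintro ⟨F, hc, he⟩
  exact ⟨F, fun s hs => (hc s hs).trans h, he⟩

universe u

/-- A path decomposition indexed by `ℕ`, supported on `[1,N]`, of width `w`. -/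
structure PD {V : Type u} (G : SimpleGraph V) (w N : ℕ) where
  B : ℕ → Finset V
  cov : ∀ v, ∃ t, v ∈ B t
  conv : ∀ (v : V) (s t r : ℕ), s ≤ t → t ≤ r → v ∈ B s → v ∈ B r → v ∈ B t
  edge : ∀ u v, G.Adj u v → ∃ t, u ∈ B t ∧ v ∈ B t
  card_le : ∀ t, (B t).card ≤ w + 1
  range : ∀ v t, v ∈ B t → 1 ≤ t ∧ t ≤ N

namespace PD

variable {V : Type u} {G : SimpleGraph V} {w N : ℕ} (D : PD G w N)

noncomputable def lv (v : V) : ℕ := Nat.find (D.cov v)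

noncomputable def rv (v : V) : ℕ := Nat.findGreatest (fun t => v ∈ D.B t) N

lemma mem_lv (v : V) : v ∈ D.B (D.lv v) := Nat.find_spec (D.cov v)

lemma lv_le {v : V} {t : ℕ} (h : v ∈ D.B t) : D.lv v ≤ t := Nat.find_min' _ h

lemma mem_rv (v : V) : v ∈ D.B (D.rv v) := by
  obtain ⟨t, ht⟩ := D.cov v
  exact Nat.findGreatest_spec (P := fun t => v ∈ D.B t) (D.range v t ht).2 ht

lemma le_rv {v : V} {t : ℕ} (h : v ∈ D.B t) : t ≤ D.rv v :=
  Nat.le_findGreatest (P := fun t => v ∈ D.B t) (D.range v t h).2 h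

lemma lv_pos (v : V) : 1 ≤ D.lv v := (D.range v _ (D.mem_lv v)).1

lemma rv_le_N (v : V) : D.rv v ≤ N := (D.range v _ (D.mem_rv v)).2

lemma lv_le_rv (v : V) : D.lv v ≤ D.rv v := D.le_rv (D.mem_lv v)

lemma mem_iff {v : V} {t : ℕ} : v ∈ D.B t ↔ D.lv v ≤ t ∧ t ≤ D.rv v := by
  constructor
  · exact fun h => ⟨D.lv_le h, D.le_rv h⟩
  · exact fun ⟨h1, h2⟩ => D.conv v _ _ _ h1 h2 (D.mem_lv v) (D.mem_rv v)

/-! ### Breakpoints -/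

noncomputable def brkStep (b : ℕ) : ℕ :=
  if h : ((D.B (b + 1)).image D.rv).Nonempty
  then ((D.B (b + 1)).image D.rv).max' h
  else b + 1

noncomputable def brk : ℕ → ℕ
  | 0 => 0
  | i + 1 => D.brkStep (brk i)

lemma brk_zero : D.brk 0 = 0 := rfl

lemma brk_succ (i : ℕ) : D.brk (i + 1) = D.brkStep (D.brk i) := rfl

lemma rv_le_brk_succ {x : V} {i : ℕ} (hx : x ∈ D.B (D.brk i + 1)) :
    D.rv x ≤ D.brk (i + 1) := by
  have h : ((D.B (D.brk i + 1)).image D.rv).Nonempty :=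
    ⟨D.rv x, Finset.mem_image_of_mem _ hx⟩
  rw [brk_succ, brkStep, dif_pos h]
  exact Finset.le_max' _ _ (Finset.mem_image_of_mem _ hx)

lemma brk_lt_succ (i : ℕ) : D.brk i < D.brk (i + 1) := by
  by_cases h : ((D.B (D.brk i + 1)).image D.rv).Nonempty
  · obtain ⟨r, hr⟩ := h
    obtain ⟨x, hx, rfl⟩ := Finset.mem_image.1 hr
    have h1 : D.brk i + 1 ≤ D.rv x := D.le_rv hx
    have h2 : D.rv x ≤ D.brk (i + 1) := D.rv_le_brk_succ hx
    omega
  · rw [brk_succ, brkStep, dif_neg h]; omega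

lemma brk_mono : StrictMono D.brk := strictMono_nat_of_lt_succ D.brk_lt_succ

lemma brk_le_brk {i j : ℕ} (h : i ≤ j) : D.brk i ≤ D.brk j := D.brk_mono.monotone h

lemma brk_ge (i : ℕ) : i ≤ D.brk i := by
  induction i with
  | zero => simp [brk_zero]
  | succ n ih => have := D.brk_lt_succ n; omega

lemma spine_ex {i : ℕ} (h : (D.B (D.brk i + 1)).Nonempty) :
    ∃ x, x ∈ D.B (D.brk i + 1) ∧ D.rv x = D.brk (i + 1) := by
  have h' : ((D.B (D.brk i + 1)).image D.rv).Nonempty := h.image _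
  have hm := Finset.max'_mem _ h'
  obtain ⟨x, hx, hxe⟩ := Finset.mem_image.1 hm
  refine ⟨x, hx, ?_⟩
  rw [hxe, brk_succ, brkStep, dif_pos h']

/-! ### Crossing vertices -/

def Cross (v : V) : Prop := ∃ j, 1 ≤ j ∧ D.lv v ≤ D.brk j ∧ D.brk j ≤ D.rv v

noncomputable def Jx (v : V) : ℕ := if h : D.Cross v then Nat.find h else 0

lemma Jx_pos {v : V} (h : D.Cross v) : 1 ≤ D.Jx v := by
  rw [Jx, dif_pos h]; exact (Nat.find_spec h).1

lemma Jx_spec {v : V} (h : D.Cross v) :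
    D.lv v ≤ D.brk (D.Jx v) ∧ D.brk (D.Jx v) ≤ D.rv v := by
  rw [Jx, dif_pos h]; exact ⟨(Nat.find_spec h).2.1, (Nat.find_spec h).2.2⟩

lemma Jx_min {v : V} (h : D.Cross v) {j : ℕ} (h1 : 1 ≤ j)
    (h2 : D.lv v ≤ D.brk j) (h3 : D.brk j ≤ D.rv v) : D.Jx v ≤ j := by
  rw [Jx, dif_pos h]; exact Nat.find_min' h ⟨h1, h2, h3⟩

lemma lv_gt_brk_pred {v : V} (h : D.Cross v) : D.brk (D.Jx v - 1) < D.lv v := by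
  rcases Nat.eq_or_lt_of_le (D.Jx_pos h) with h1 | h1
  · rw [← h1]; simp only [brk_zero, Nat.sub_self]; exact D.lv_pos v
  · by_contra hc
    push_neg at hc
    have h2 : D.brk (D.Jx v - 1) ≤ D.rv v :=
      le_trans (D.brk_le_brk (by omega)) (D.Jx_spec h).2
    have := D.Jx_min h (j := D.Jx v - 1) (by omega) hc h2
    omega

lemma rv_le_brk_Jx_succ {v : V} (h : D.Cross v) : D.rv v ≤ D.brk (D.Jx v + 1) := by
  by_cases hc : D.brk (D.Jx v) + 1 ≤ D.rv v
  · have hmem : v ∈ D.B (D.brk (D.Jx v) + 1) :=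
      D.mem_iff.2 ⟨le_trans (D.Jx_spec h).1 (by omega), hc⟩
    exact D.rv_le_brk_succ hmem
  · push_neg at hc
    exact le_trans (by omega) (D.brk_le_brk (by omega : D.Jx v ≤ D.Jx v + 1))

/-! ### Segments for non-crossing vertices -/

noncomputable def iseg (v : V) : ℕ := Nat.findGreatest (fun i => D.brk i < D.lv v) (D.lv v)

lemma brk_iseg_lt (v : V) : D.brk (D.iseg v) < D.lv v := by
  have h0 : D.brk 0 < D.lv v := by rw [brk_zero]; exact D.lv_pos v
  exact Nat.findGreatest_spec (P := fun i => D.brk i < D.lv v) (Nat.zero_le _) h0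

lemma lv_le_brk_iseg_succ (v : V) : D.lv v ≤ D.brk (D.iseg v + 1) := by
  by_contra hx
  push_neg at hx
  have hb := D.brk_ge (D.iseg v + 1)
  have hgr : D.iseg v < D.iseg v + 1 := Nat.lt_succ_self _
  exact Nat.findGreatest_is_greatest (P := fun i => D.brk i < D.lv v) (n := D.lv v)
    hgr (by omega) hx

lemma rv_lt_iseg_succ {v : V} (h : ¬ D.Cross v) : D.rv v < D.brk (D.iseg v + 1) := by
  by_contra hx
  push_neg at hx
  exact h ⟨D.iseg v + 1, by omega, D.lv_le_brk_iseg_succ v, hx⟩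

/-- colour-`c` crossing vertex belonging to window `M` (`c` is `0` or `2`). -/
def Sig (c M : ℕ) (v : V) : Prop :=
  D.Cross v ∧ (D.Jx v = 4 * M + c ∨ D.Jx v = 4 * M + c + 1)

lemma Sig_win_unique {c M M' : ℕ} {v : V} (h : D.Sig c M v) (h' : D.Sig c M' v) :
    M = M' := by
  rcases h.2 with h1 | h1 <;> rcases h'.2 with h2 | h2 <;> omega

/-- classification of a window-`M` crosser: 0 = spanning, 2 = dies at `p`, 1 = middle. -/
noncomputable def cls (c M : ℕ) (v : V) : ℕ :=
  if D.lv v ≤ D.brk (4 * M + c) ∧ D.brk (4 * M + c + 1) ≤ D.rv v then 0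
  else if D.rv v = D.brk (4 * M + c) then 2 else 1

lemma cls_le_two (c M : ℕ) (v : V) : D.cls c M v ≤ 2 := by
  rw [cls]; split_ifs <;> omega

lemma cls0_spec {c M : ℕ} {v : V} (h : D.cls c M v = 0) :
    D.lv v ≤ D.brk (4 * M + c) ∧ D.brk (4 * M + c + 1) ≤ D.rv v := by
  by_contra hx
  rw [cls, if_neg hx] at h
  split_ifs at h <;> omega

lemma cls2_spec {c M : ℕ} {v : V} (h : D.cls c M v = 2) :
    D.rv v = D.brk (4 * M + c) ∧ D.lv v ≤ D.brk (4 * M + c) := by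
  by_contra hx
  rw [cls] at h
  split_ifs at h with h1 h2
  all_goals first
    | omega
    | exact hx ⟨h2, le_trans (D.lv_le_rv v) (le_of_eq h2)⟩

lemma cls1_spec {c M : ℕ} {v : V} (h : D.cls c M v = 1) :
    ¬(D.lv v ≤ D.brk (4 * M + c) ∧ D.brk (4 * M + c + 1) ≤ D.rv v) ∧
      D.rv v ≠ D.brk (4 * M + c) := by
  by_contra hx
  rw [cls] at h
  split_ifs at h with h1 h2
  all_goals first
    | omega
    | exact hx ⟨h1, h2⟩

lemma Sig_mem_p_or_q {c M : ℕ} {v : V} (h : D.Sig c M v) :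
    (D.lv v ≤ D.brk (4 * M + c) ∧ D.brk (4 * M + c) ≤ D.rv v) ∨
    (D.lv v ≤ D.brk (4 * M + c + 1) ∧ D.brk (4 * M + c + 1) ≤ D.rv v) := by
  have hs := D.Jx_spec h.1
  rcases h.2 with h1 | h1
  · left; rw [← h1]; exact hs
  · right; rw [← h1]; exact hs

lemma cls_ne2_mem {c M : ℕ} {v : V} (hS : D.Sig c M v) (h : D.cls c M v ≠ 2) :
    v ∈ D.B (D.brk (4 * M + c) + 1) ∨ v ∈ D.B (D.brk (4 * M + c + 1)) := by
  have hpq : D.brk (4 * M + c) < D.brk (4 * M + c + 1) := D.brk_lt_succ _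
  rcases D.Sig_mem_p_or_q hS with ⟨h1, h2⟩ | ⟨h1, h2⟩
  · -- v contains p
    have hcl : D.cls c M v = 0 ∨ D.cls c M v = 1 ∨ D.cls c M v = 2 := by
      have := D.cls_le_two c M v; omega
    rcases hcl with hcl | hcl | hcl
    · left
      have := D.cls0_spec hcl
      exact D.mem_iff.2 ⟨by omega, by omega⟩
    · left
      have := (D.cls1_spec hcl).2
      exact D.mem_iff.2 ⟨by omega, by omega⟩
    · exact absurd hcl h
  · right; exact D.mem_iff.2 ⟨h1, h2⟩

/-- the excluded pairs are at positive distance. -/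
lemma excl_sep {c M : ℕ} {u v : V} (h1 : D.cls c M u = 1)
    (hq : D.brk (4 * M + c + 1) ≤ D.rv u) (h2 : D.cls c M v = 2) :
    D.rv v < D.lv u := by
  have hu := D.cls1_spec h1
  have hv := D.cls2_spec h2
  have hpq : D.brk (4 * M + c) < D.brk (4 * M + c + 1) := D.brk_lt_succ _
  have : ¬ D.lv u ≤ D.brk (4 * M + c) := fun hx => hu.1 ⟨hx, hq⟩
  omega

/-- two same-colour crossers whose intervals share a point lie in the same window. -/
lemma overlap_win {c M M' : ℕ} {u v : V} (hu : D.Sig c M u) (hv : D.Sig c M' v)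
    {t : ℕ} (h1 : D.lv u ≤ t) (h2 : t ≤ D.rv u) (h3 : D.lv v ≤ t) (h4 : t ≤ D.rv v) :
    M = M' := by
  have e1 : D.brk (D.Jx v - 1) < D.brk (D.Jx u + 1) :=
    lt_of_lt_of_le (lt_of_lt_of_le (D.lv_gt_brk_pred hv.1) (le_trans h3 h2))
      (D.rv_le_brk_Jx_succ hu.1)
  have e2 : D.brk (D.Jx u - 1) < D.brk (D.Jx v + 1) :=
    lt_of_lt_of_le (lt_of_lt_of_le (D.lv_gt_brk_pred hu.1) (le_trans h1 h4))
      (D.rv_le_brk_Jx_succ hv.1)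
  have f1 : D.Jx v - 1 < D.Jx u + 1 := D.brk_mono.lt_iff_lt.1 e1
  have f2 : D.Jx u - 1 < D.Jx v + 1 := D.brk_mono.lt_iff_lt.1 e2
  rcases hu.2 with g1 | g1 <;> rcases hv.2 with g2 | g2 <;> omega

/-- a window-`M` crosser meeting the open segment `i`: window relation and U-membership. -/
lemma cross_meets_seg {c M : ℕ} {σ x : V} (hσ : D.Sig c M σ) (hx : ¬ D.Cross x)
    {t : ℕ} (h1 : D.lv σ ≤ t) (h2 : t ≤ D.rv σ) (h3 : D.lv x ≤ t) (h4 : t ≤ D.rv x) :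
    (4 * M + c ≤ D.iseg x + 1 ∧ D.iseg x + 1 ≤ 4 * M + c + 3) ∧
    (D.iseg x + 1 = 4 * M + c →
      D.lv σ ≤ D.brk (4 * M + c) ∧ D.brk (4 * M + c) ≤ D.rv σ) ∧
    (D.iseg x + 1 ≠ 4 * M + c → D.cls c M σ ≠ 2) := by
  set i := D.iseg x with hi
  have hb1 : D.brk i < t := lt_of_lt_of_le (D.brk_iseg_lt x) h3
  have hb2 : t < D.brk (i + 1) := lt_of_le_of_lt h4 (D.rv_lt_iseg_succ hx)
  -- i ≤ Jx σ
  have hu1 : D.brk i < D.brk (D.Jx σ + 1) :=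
    lt_of_lt_of_le (lt_of_lt_of_le hb1 h2) (D.rv_le_brk_Jx_succ hσ.1)
  have hiJ : i < D.Jx σ + 1 := D.brk_mono.lt_iff_lt.1 hu1
  -- Jx σ ≤ i + 1
  have hu2 : D.brk (D.Jx σ - 1) < D.brk (i + 1) :=
    lt_of_lt_of_le (D.lv_gt_brk_pred hσ.1) (le_trans h1 (le_of_lt hb2))
  have hJi : D.Jx σ - 1 < i + 1 := D.brk_mono.lt_iff_lt.1 hu2
  have hJpos := D.Jx_pos hσ.1
  refine ⟨by rcases hσ.2 with g | g <;> omega, ?_, ?_⟩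
  · intro hpos
    have hJ : D.Jx σ = 4 * M + c := by rcases hσ.2 with g | g <;> omega
    rw [← hJ]; exact D.Jx_spec hσ.1
  · intro hpos hcl
    have hrv := (D.cls2_spec hcl).1
    -- J = 4M+c since brk J ≤ rv σ = brk (4M+c)
    have hJle : D.brk (D.Jx σ) ≤ D.brk (4 * M + c) := hrv ▸ (D.Jx_spec hσ.1).2
    have hJle' : D.Jx σ ≤ 4 * M + c := D.brk_mono.le_iff_le.1 hJle
    have hJ : D.Jx σ = 4 * M + c := by rcases hσ.2 with g | g <;> omega
    -- t ≤ rv σ = brk (4M+c) and brk i < t gives i < 4M+c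
    have : D.brk i < D.brk (4 * M + c) := by omega
    have hi4 : i < 4 * M + c := D.brk_mono.lt_iff_lt.1 this
    omega

/-- two non-crossers sharing a bag lie in the same segment. -/
lemma noncross_same_seg {x y : V} (hx : ¬ D.Cross x) (hy : ¬ D.Cross y)
    {t : ℕ} (h1 : D.lv x ≤ t) (h2 : t ≤ D.rv x) (h3 : D.lv y ≤ t) (h4 : t ≤ D.rv y) :
    D.iseg x = D.iseg y := by
  have a1 : D.brk (D.iseg x) < t := lt_of_lt_of_le (D.brk_iseg_lt x) h1
  have a2 : t < D.brk (D.iseg x + 1) := lt_of_le_of_lt h2 (D.rv_lt_iseg_succ hx)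
  have a3 : D.brk (D.iseg y) < t := lt_of_lt_of_le (D.brk_iseg_lt y) h3
  have a4 : t < D.brk (D.iseg y + 1) := lt_of_le_of_lt h4 (D.rv_lt_iseg_succ hy)
  have b1 : D.iseg x < D.iseg y + 1 := D.brk_mono.lt_iff_lt.1 (lt_trans a1 a4)
  have b2 : D.iseg y < D.iseg x + 1 := D.brk_mono.lt_iff_lt.1 (lt_trans a3 a2)
  omega

/-- the union of the two bags hosting the tops of a window has at most `2w+1` vertices. -/
lemma card_pq (i : ℕ) :
    (D.B (D.brk i + 1) ∪ D.B (D.brk (i + 1))).card ≤ 2 * w + 1 := by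
  by_cases h : (D.B (D.brk i + 1)).Nonempty
  · obtain ⟨y, hy, hyr⟩ := D.spine_ex h
    have hy2 : y ∈ D.B (D.brk (i + 1)) := by
      refine D.mem_iff.2 ⟨?_, by omega⟩
      have := D.lv_le hy
      have := D.brk_lt_succ i
      omega
    have hsub : D.B (D.brk i + 1) ∪ D.B (D.brk (i + 1)) ⊆
        D.B (D.brk i + 1) ∪ (D.B (D.brk (i + 1))).erase y := by
      intro z hz
      rcases Finset.mem_union.1 hz with hz | hz
      · exact Finset.mem_union_left _ hz
      · by_cases hzy : z = y
        · exact Finset.mem_union_left _ (hzy ▸ hy)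
        · exact Finset.mem_union_right _ (Finset.mem_erase.2 ⟨hzy, hz⟩)
    calc (D.B (D.brk i + 1) ∪ D.B (D.brk (i + 1))).card
        ≤ (D.B (D.brk i + 1) ∪ (D.B (D.brk (i + 1))).erase y).card :=
          Finset.card_le_card hsub
      _ ≤ (D.B (D.brk i + 1)).card + ((D.B (D.brk (i + 1))).erase y).card :=
          Finset.card_union_le _ _
      _ ≤ (w + 1) + w := by
          have h1 := D.card_le (D.brk i + 1)
          have h2 := D.card_le (D.brk (i + 1))
          have h3 := Finset.card_erase_of_mem hy2
          omega
      _ = 2 * w + 1 := by omega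
  · rw [Finset.not_nonempty_iff_eq_empty.1 h, Finset.empty_union]
    have := D.card_le (D.brk (i + 1))
    omega

end PD

section Step

variable {V : Type u}

set_option maxHeartbeats 4000000 in
theorem step (G : SimpleGraph V) (k N : ℕ) (D : PD G (k + 1) N)
    (IH : ∀ (s : Set V), PD (G.induce s) k N →
      ∃ f' : ↥s → Fin 2, ∀ b, treedepthLE ((G.induce s).induce {x | f' x = b}) ((k + 1) ^ 2)) :
    ∃ f : V → Fin 2, ∀ b, treedepthLE (G.induce {v | f v = b}) ((k + 2) ^ 2) := by
  classical
  -- the segment pieces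
  set Rs : ℕ → Set V := fun i => {v | ¬ D.Cross v ∧ D.iseg v = i} with hRs
  -- if the bag right after a breakpoint is empty, the next breakpoint is adjacent
  have hbrk_empty : ∀ i, D.B (D.brk i + 1) = ∅ → D.brk (i + 1) = D.brk i + 1 := by
    intro i h
    rw [PD.brk_succ, PD.brkStep, dif_neg (by simp [h])]
  -- non-crossing vertices in a nonempty piece bag force a spine
  have pieceD : ∀ i : ℕ, PD (G.induce (Rs i)) k N := by
    intro i
    refine ⟨fun t => (D.B t).subtype (· ∈ Rs i), ?_, ?_, ?_, ?_, ?_⟩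
    · exact fun x => ⟨D.lv x.1, Finset.mem_subtype.2 (D.mem_lv x.1)⟩
    · intro x s t r h1 h2 hs hr
      exact Finset.mem_subtype.2
        (D.conv x.1 s t r h1 h2 (Finset.mem_subtype.1 hs) (Finset.mem_subtype.1 hr))
    · intro x y hxy
      obtain ⟨t, ht1, ht2⟩ := D.edge x.1 y.1 hxy
      exact ⟨t, Finset.mem_subtype.2 ht1, Finset.mem_subtype.2 ht2⟩
    · intro t
      rw [Finset.card_subtype]
      rcases Finset.eq_empty_or_nonempty ((D.B t).filter (· ∈ Rs i)) with he | ⟨x, hx⟩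
      · rw [he]; simp
      · have hxB : x ∈ D.B t := (Finset.mem_filter.1 hx).1
        have hxR : x ∈ Rs i := (Finset.mem_filter.1 hx).2
        obtain ⟨hxc, hxi⟩ := hxR
        have ht1 : D.brk i < t := by
          have h1 := D.brk_iseg_lt x
          rw [hxi] at h1
          have := D.lv_le hxB
          omega
        have ht2 : t < D.brk (i + 1) := by
          have h1 := D.rv_lt_iseg_succ hxc
          rw [hxi] at h1
          have := D.le_rv hxB
          omega
        have hne : (D.B (D.brk i + 1)).Nonempty := by
          rcases Finset.eq_empty_or_nonempty (D.B (D.brk i + 1)) with he2 | h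
          · exfalso; have := hbrk_empty i he2; omega
          · exact h
        obtain ⟨y, hy, hyr⟩ := D.spine_ex hne
        have hyt : y ∈ D.B t := by
          refine D.mem_iff.2 ⟨?_, by omega⟩
          have := D.lv_le hy; omega
        have hyc : D.Cross y := by
          refine ⟨i + 1, by omega, ?_, by omega⟩
          have := D.lv_le hy
          have := D.brk_lt_succ i
          omega
        have hsub : (D.B t).filter (· ∈ Rs i) ⊆ (D.B t).erase y := by
          rw [Finset.subset_erase]
          refine ⟨Finset.filter_subset _ _, fun hmem => ?_⟩
          exact ((Finset.mem_filter.1 hmem).2).1 hyc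
        have := Finset.card_le_card hsub
        have := Finset.card_erase_of_mem hyt
        have := D.card_le t
        omega
    · intro x t h
      exact D.range x.1 t (Finset.mem_subtype.1 h)
  choose g hg using fun i => IH (Rs i) (pieceD i)
  choose Fo hFchain hFedge using fun i b => hg i b
  -- the colouring
  set χ : ℕ → Fin 2 := fun j => if j % 4 < 2 then 0 else 1 with hχ
  set f : V → Fin 2 := fun v =>
    if h : D.Cross v then χ (D.Jx v)
    else g (D.iseg v) ⟨v, h, rfl⟩ with hf
  refine ⟨f, ?_⟩
  intro b
  set c : ℕ := 2 * b.val with hc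
  have hcval : b.val = 0 ∨ b.val = 1 := by omega
  -- colour of crossers
  have hcolJ : ∀ v, D.Cross v → f v = b →
      D.Jx v % 4 = c ∨ D.Jx v % 4 = c + 1 := by
    intro v h hb
    rw [hf] at hb
    simp only [dif_pos h, hχ] at hb
    have h4 : D.Jx v % 4 < 4 := Nat.mod_lt _ (by norm_num)
    split_ifs at hb with hj
    · have := congrArg Fin.val hb
      simp at this
      omega
    · have := congrArg Fin.val hb
      simp at this
      omega
  have mkSig : ∀ v, D.Cross v → f v = b → D.Sig c (D.Jx v / 4) v := by
    intro v h hb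
    exact ⟨h, by rcases hcolJ v h hb with h1 | h1 <;> omega⟩
  -- colour of non-crossers
  have hgb : ∀ (v : V) (i : ℕ) (hv : v ∈ Rs i), f v = b → g i ⟨v, hv⟩ = b := by
    intro v i hv hb
    obtain ⟨hnc, hi⟩ := hv
    subst hi
    rw [hf] at hb
    simp only [dif_neg hnc] at hb
    convert hb using 2
  -- converse: colour of crossers from Sig
  have hSigCol : ∀ (v : V) (M : ℕ), D.Sig c M v → f v = b := by
    intro v M hS
    rw [hf]
    simp only [dif_pos hS.1, hχ]
    have hm : D.Jx v % 4 = c ∨ D.Jx v % 4 = c + 1 := by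
      rcases hS.2 with h1 | h1 <;> (rw [h1]; omega)
    split_ifs with hj
    · have hb0 : b.val = 0 := by omega
      exact Fin.ext (by simp [hb0])
    · have hb1 : b.val = 1 := by omega
      exact Fin.ext (by simp [hb1])
  -- a tie-breaking injection
  have hFin : Finite V := by
    have hsub : ∀ v : V, v ∈ (Finset.range (N + 1)).biUnion D.B := by
      intro v
      refine Finset.mem_biUnion.2 ⟨D.lv v, Finset.mem_range.2 ?_, D.mem_lv v⟩
      have := (D.range v _ (D.mem_lv v)).2
      omega
    exact Finite.of_injective
      (fun v => (⟨v, hsub v⟩ : {x // x ∈ (Finset.range (N + 1)).biUnion D.B}))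
      fun a b h => congrArg Subtype.val h
  obtain ⟨tie, htie⟩ := exists_injective_nat V
  -- keys
  set pr : ℕ → V → ℕ := fun M v => if D.cls c M v = 1 then D.rv v else 0 with hpr
  set κ : ℕ → V → ℕ ×ₗ (ℕ ×ₗ ℕ) := fun M v =>
    toLex (D.cls c M v, toLex (pr M v, tie v)) with hκ
  have κlt_iff : ∀ M u v, κ M u < κ M v ↔
      (D.cls c M u < D.cls c M v ∨ (D.cls c M u = D.cls c M v ∧
        (pr M u < pr M v ∨ (pr M u = pr M v ∧ tie u < tie v)))) := by
    intro M u v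
    rw [hκ]
    simp only [Prod.Lex.lt_iff, ofLex_toLex]
  have κtri : ∀ M (u v : V), u = v ∨ κ M u < κ M v ∨ κ M v < κ M u := by
    intro M u v
    rcases lt_trichotomy (κ M u) (κ M v) with h | h | h
    · exact Or.inr (Or.inl h)
    · left
      rw [hκ] at h
      have h1 : (D.cls c M u, toLex (pr M u, tie u)) = (D.cls c M v, toLex (pr M v, tie v)) :=
        congrArg ofLex h
      have h2 : toLex (pr M u, tie u) = toLex (pr M v, tie v) := congrArg Prod.snd h1
      have h3 : (pr M u, tie u) = (pr M v, tie v) := congrArg ofLex h2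
      exact htie (congrArg Prod.snd h3)
    · exact Or.inr (Or.inr h)
  -- piece order on V
  set ρ : ℕ → V → V → Prop := fun i u v =>
    ∃ (hu : u ∈ Rs i) (hv : v ∈ Rs i) (pu : g i ⟨u, hu⟩ = b) (pv : g i ⟨v, hv⟩ = b),
      (Fo i b).le ⟨⟨u, hu⟩, pu⟩ ⟨⟨v, hv⟩, pv⟩ with hρ
  have ρsub : ∀ {α : Set V} {P : ↥α → Prop} (x y : {z : ↥α // P z}),
      x.1.1 = y.1.1 → x = y := by
    intro α P x y h
    exact Subtype.ext (Subtype.ext h)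
  have ρirrel : ∀ i (u : V) (h1 h2 : u ∈ Rs i) (p1 : g i ⟨u, h1⟩ = b) (p2 : g i ⟨u, h2⟩ = b),
      (⟨⟨u, h1⟩, p1⟩ : {z : ↥(Rs i) // g i z = b}) = ⟨⟨u, h2⟩, p2⟩ := by
    intro i u h1 h2 p1 p2
    exact ρsub _ _ rfl
  have ρtrans : ∀ i u v w, ρ i u v → ρ i v w → ρ i u w := by
    rintro i u v w ⟨hu, hv, pu, pv, h1⟩ ⟨hv', hw, pv', pw, h2⟩
    refine ⟨hu, hw, pu, pw, (Fo i b).trans _ _ _ h1 ?_⟩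
    rwa [ρirrel i v hv' hv pv' pv] at h2
  have ρanti : ∀ i u v, ρ i u v → ρ i v u → u = v := by
    rintro i u v ⟨hu, hv, pu, pv, h1⟩ ⟨hv', hu', pv', pu', h2⟩
    have := (Fo i b).antisymm _ _ h1 (by
      rwa [ρirrel i v hv' hv pv' pv, ρirrel i u hu' hu pu' pu] at h2)
    exact congrArg (fun z => z.1.1) this
  have ρdown : ∀ i u v w, ρ i u w → ρ i v w → ρ i u v ∨ ρ i v u := by
    rintro i u v w ⟨hu, hw, pu, pw, h1⟩ ⟨hv, hw', pv, pw', h2⟩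
    rcases (Fo i b).downChain _ _ _ h1 (by
      rwa [ρirrel i w hw' hw pw' pw] at h2) with h | h
    · exact Or.inl ⟨hu, hv, pu, pv, h⟩
    · exact Or.inr ⟨hv, hu, pv, pu, h⟩
  have ρrefl : ∀ i u (hu : u ∈ Rs i), f u = b → ρ i u u := by
    intro i u hu hb
    exact ⟨hu, hu, hgb u i hu hb, hgb u i hu hb, (Fo i b).refl _⟩
  -- the set and the order
  set Sb : Set V := {v | f v = b} with hSb
  set le : ↥Sb → ↥Sb → Prop := fun x y =>
    x = y
    ∨ (∃ M, D.Sig c M x.1 ∧ D.Sig c M y.1 ∧ κ M x.1 < κ M y.1 ∧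
        ¬(D.cls c M x.1 = 1 ∧ D.brk (4 * M + c + 1) ≤ D.rv x.1 ∧ D.cls c M y.1 = 2))
    ∨ (∃ M, D.Sig c M x.1 ∧ ¬ D.Cross y.1 ∧
        (4 * M + c ≤ D.iseg y.1 + 1 ∧ D.iseg y.1 + 1 ≤ 4 * M + c + 3) ∧
        (if D.iseg y.1 + 1 = 4 * M + c
         then D.lv x.1 ≤ D.brk (4 * M + c) ∧ D.brk (4 * M + c) ≤ D.rv x.1
         else D.cls c M x.1 ≠ 2)) ∨ (∃ i, ρ i x.1 y.1) with hle
  -- upward closedness of S_p membership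
  have hposup : ∀ M (x y : V), D.Sig c M x → D.Sig c M y →
      κ M x < κ M y →
      ¬(D.cls c M x = 1 ∧ D.brk (4 * M + c + 1) ≤ D.rv x ∧ D.cls c M y = 2) →
      (D.lv y ≤ D.brk (4 * M + c) ∧ D.brk (4 * M + c) ≤ D.rv y) →
      D.lv x ≤ D.brk (4 * M + c) ∧ D.brk (4 * M + c) ≤ D.rv x := by
    intro M x y hSx hSy hκxy hcmp hySp
    have hpq : D.brk (4 * M + c) < D.brk (4 * M + c + 1) := D.brk_lt_succ _
    have hcx : D.cls c M x = 0 ∨ D.cls c M x = 1 ∨ D.cls c M x = 2 := by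
      have := D.cls_le_two c M x; omega
    rcases hcx with h0 | h1 | h2
    · have := D.cls0_spec h0; omega
    · have hxlt : D.rv x < D.brk (4 * M + c + 1) := by
        have hlex := (κlt_iff M x y).1 hκxy
        have hcy : D.cls c M y = 0 ∨ D.cls c M y = 1 ∨ D.cls c M y = 2 := by
          have := D.cls_le_two c M y; omega
        rcases hcy with g0 | g1 | g2
        · omega
        · have hyq : D.rv y < D.brk (4 * M + c + 1) := by
            have := (D.cls1_spec g1).1
            omega
          have hprx : pr M x = D.rv x := by simp [hpr, h1]
          have hpry : pr M y = D.rv y := by simp [hpr, g1]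
          omega
        · have : ¬ D.brk (4 * M + c + 1) ≤ D.rv x := fun hq => hcmp ⟨h1, hq, g2⟩
          omega
      rcases D.Sig_mem_p_or_q hSx with h | h
      · exact h
      · omega
    · have := D.cls2_spec h2; omega
  have hclsle : ∀ M (x y : V), κ M x < κ M y → D.cls c M x ≤ D.cls c M y := by
    intro M x y h
    have := (κlt_iff M x y).1 h
    omega
  -- transitivity of compatibility
  have hcmptr : ∀ M (x y z : V), κ M x < κ M y → κ M y < κ M z →
      ¬(D.cls c M x = 1 ∧ D.brk (4 * M + c + 1) ≤ D.rv x ∧ D.cls c M y = 2) →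
      ¬(D.cls c M y = 1 ∧ D.brk (4 * M + c + 1) ≤ D.rv y ∧ D.cls c M z = 2) →
      ¬(D.cls c M x = 1 ∧ D.brk (4 * M + c + 1) ≤ D.rv x ∧ D.cls c M z = 2) := by
    rintro M x y z h1 h2 c1 c2 ⟨b1, b2, b3⟩
    have l1 := (κlt_iff M x y).1 h1
    have l2 := (κlt_iff M y z).1 h2
    have hy2 := D.cls_le_two c M y
    have hg : D.cls c M y = 1 ∨ D.cls c M y = 2 := by omega
    rcases hg with g | g
    · have hprx : pr M x = D.rv x := by simp [hpr, b1]
      have hpry : pr M y = D.rv y := by simp [hpr, g]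
      exact c2 ⟨g, by omega, b3⟩
    · exact c1 ⟨b1, b2, g⟩
  -- comparability builder for same-window crossers
  have hcc : ∀ M (x y : ↥Sb), D.Sig c M x.1 → D.Sig c M y.1 →
      ¬(D.cls c M x.1 = 1 ∧ D.brk (4 * M + c + 1) ≤ D.rv x.1 ∧ D.cls c M y.1 = 2) →
      ¬(D.cls c M y.1 = 1 ∧ D.brk (4 * M + c + 1) ≤ D.rv y.1 ∧ D.cls c M x.1 = 2) →
      le x y ∨ le y x := by
    intro M x y hSx hSy c1 c2
    rcases κtri M x.1 y.1 with he | h | h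
    · exact Or.inl (Or.inl (Subtype.ext he))
    · exact Or.inl (Or.inr (Or.inl ⟨M, hSx, hSy, h, c1⟩))
    · exact Or.inr (Or.inr (Or.inl ⟨M, hSy, hSx, h, c2⟩))
  -- adjacent same-window crossers never form a bad pair
  have hnobad_pt : ∀ M (x y : V) (t : ℕ), D.lv x ≤ t → t ≤ D.rv x →
      D.lv y ≤ t → t ≤ D.rv y →
      ¬(D.cls c M x = 1 ∧ D.brk (4 * M + c + 1) ≤ D.rv x ∧ D.cls c M y = 2) := by
    rintro M x y t h1 h2 h3 h4 ⟨b1, b2, b3⟩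
    have := D.excl_sep b1 b2 b3
    omega
  -- crossers in S_p never form a bad pair
  have hnobad_Sp : ∀ M (x y : V),
      (D.lv x ≤ D.brk (4 * M + c) ∧ D.brk (4 * M + c) ≤ D.rv x) →
      ¬(D.cls c M x = 1 ∧ D.brk (4 * M + c + 1) ≤ D.rv x ∧ D.cls c M y = 2) := by
    rintro M x y hSp ⟨b1, b2, b3⟩
    exact (D.cls1_spec b1).1 ⟨hSp.1, b2⟩
  -- reflexivity
  have hrefl : ∀ x : ↥Sb, le x x := fun x => Or.inl rfl
  -- antisymmetry
  have hanti : ∀ x y : ↥Sb, le x y → le y x → x = y := by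
    intro x y h1 h2
    rcases h1 with h1 | h1 | h1 | h1
    · exact h1
    · rcases h2 with h2 | h2 | h2 | h2
      · exact h2.symm
      · obtain ⟨M, hSx, hSy, hk, _⟩ := h1
        obtain ⟨M', hSy', hSx', hk', _⟩ := h2
        obtain rfl : M = M' := D.Sig_win_unique hSy hSy'
        exact absurd hk' (lt_asymm hk)
      · obtain ⟨M, hSx, _, _, _⟩ := h1
        obtain ⟨M', hSy', hnx, _, _⟩ := h2
        exact absurd hSx.1 hnx
      · obtain ⟨M, hSx, _, _, _⟩ := h1
        obtain ⟨i, _, hv, _, _, _⟩ := h2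
        exact absurd hSx.1 hv.1
    · obtain ⟨M, hSx, hny, _, _⟩ := h1
      rcases h2 with h2 | h2 | h2 | h2
      · exact h2.symm
      · obtain ⟨M', hSy', _, _, _⟩ := h2
        exact absurd hSy'.1 hny
      · obtain ⟨M', hSy', _, _, _⟩ := h2
        exact absurd hSy'.1 hny
      · obtain ⟨i, _, hv, _, _, _⟩ := h2
        exact absurd hSx.1 hv.1
    · obtain ⟨i, hρ1⟩ := h1
      rcases h2 with h2 | h2 | h2 | h2
      · exact h2.symm
      · obtain ⟨M', hSy', _, _, _⟩ := h2
        obtain ⟨_, hv, _, _, _⟩ := hρ1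
        exact absurd hSy'.1 hv.1
      · obtain ⟨M', hSy', _, _, _⟩ := h2
        obtain ⟨_, hv, _, _, _⟩ := hρ1
        exact absurd hSy'.1 hv.1
      · obtain ⟨i', hρ2⟩ := h2
        have hii : i = i' := by
          obtain ⟨hu, _, _, _, _⟩ := hρ1
          obtain ⟨_, hv', _, _, _⟩ := hρ2
          rw [← hu.2, ← hv'.2]
        subst hii
        exact Subtype.ext (ρanti i _ _ hρ1 hρ2)
  -- transitivity
  have htrans : ∀ x y z : ↥Sb, le x y → le y z → le x z := by
    intro x y z h1 h2
    rcases h1 with rfl | h1 | h1 | h1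
    · exact h2
    · rcases h2 with rfl | h2 | h2 | h2
      · exact Or.inr (Or.inl h1)
      · obtain ⟨M, hSx, hSy, hk1, hc1⟩ := h1
        obtain ⟨M', hSy', hSz, hk2, hc2⟩ := h2
        obtain rfl : M = M' := D.Sig_win_unique hSy hSy'
        exact Or.inr (Or.inl ⟨M, hSx, hSz, lt_trans hk1 hk2,
          hcmptr M x.1 y.1 z.1 hk1 hk2 hc1 hc2⟩)
      · obtain ⟨M, hSx, hSy, hk1, hc1⟩ := h1
        obtain ⟨M', hSy', hnz, hseg, hcond⟩ := h2
        obtain rfl : M = M' := D.Sig_win_unique hSy hSy'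
        refine Or.inr (Or.inr (Or.inl ⟨M, hSx, hnz, hseg, ?_⟩))
        by_cases hpos : D.iseg z.1 + 1 = 4 * M + c
        · rw [if_pos hpos] at hcond ⊢
          exact hposup M x.1 y.1 hSx hSy hk1 hc1 hcond
        · rw [if_neg hpos] at hcond ⊢
          have := hclsle M x.1 y.1 hk1
          have h2x := D.cls_le_two c M x.1
          have h2y := D.cls_le_two c M y.1
          omega
      · obtain ⟨M, hSx, hSy, _, _⟩ := h1
        obtain ⟨i, hu, _, _, _, _⟩ := h2
        exact absurd hSy.1 hu.1
    · rcases h2 with rfl | h2 | h2 | h2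
      · exact Or.inr (Or.inr (Or.inl h1))
      · obtain ⟨M, _, hny, _, _⟩ := h1
        obtain ⟨M', hSy', _, _, _⟩ := h2
        exact absurd hSy'.1 hny
      · obtain ⟨M, _, hny, _, _⟩ := h1
        obtain ⟨M', hSy', _, _, _⟩ := h2
        exact absurd hSy'.1 hny
      · obtain ⟨M, hSx, hny, hseg, hcond⟩ := h1
        obtain ⟨i, hu, hv, _, _, _⟩ := h2
        have e1 : D.iseg y.1 = i := hu.2
        have e2 : D.iseg z.1 = i := hv.2
        refine Or.inr (Or.inr (Or.inl ⟨M, hSx, hv.1, ?_, ?_⟩))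
        · rw [e2, ← e1]; exact hseg
        · rw [e2, ← e1]; exact hcond
    · rcases h2 with rfl | h2 | h2 | h2
      · exact Or.inr (Or.inr (Or.inr h1))
      · obtain ⟨i, hρ1⟩ := h1
        obtain ⟨M', hSy', _, _, _⟩ := h2
        obtain ⟨_, hv, _, _, _⟩ := hρ1
        exact absurd hSy'.1 hv.1
      · obtain ⟨i, hρ1⟩ := h1
        obtain ⟨M', hSy', _, _, _⟩ := h2
        obtain ⟨_, hv, _, _, _⟩ := hρ1
        exact absurd hSy'.1 hv.1
      · obtain ⟨i, hρ1⟩ := h1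
        obtain ⟨i', hρ2⟩ := h2
        have hii : i = i' := by
          obtain ⟨_, hv, _, _, _⟩ := hρ1
          obtain ⟨hu', _, _, _, _⟩ := hρ2
          rw [← hv.2, ← hu'.2]
        subst hii
        exact Or.inr (Or.inr (Or.inr ⟨i, ρtrans i _ _ _ hρ1 hρ2⟩))
  -- down-chains
  have hdown : ∀ x y z : ↥Sb, le x z → le y z → le x y ∨ le y x := by
    intro x y z h1 h2
    rcases h1 with rfl | h1 | h1 | h1
    · exact Or.inr h2
    · rcases h2 with rfl | h2 | h2 | h2
      · exact Or.inl (Or.inr (Or.inl h1))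
      · obtain ⟨M, hSx, hSz, hk1, hc1⟩ := h1
        obtain ⟨M', hSy, hSz', hk2, hc2⟩ := h2
        obtain rfl : M = M' := D.Sig_win_unique hSz hSz'
        refine hcc M x y hSx hSy ?_ ?_
        · rintro ⟨b1, b2, b3⟩
          have hy2 := hclsle M y.1 z.1 hk2
          have hz2 := D.cls_le_two c M z.1
          exact hc1 ⟨b1, b2, by omega⟩
        · rintro ⟨b1, b2, b3⟩
          have hx2 := hclsle M x.1 z.1 hk1
          have hz2 := D.cls_le_two c M z.1
          exact hc2 ⟨b1, b2, by omega⟩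
      · obtain ⟨M2, hSx2, hSz2, _, _⟩ := h1
        obtain ⟨M', hSy', hnz, _, _⟩ := h2
        exact absurd hSz2.1 hnz
      · obtain ⟨M, _, hSz, _, _⟩ := h1
        obtain ⟨i, _, hv, _, _, _⟩ := h2
        exact absurd hSz.1 hv.1
    · rcases h2 with rfl | h2 | h2 | h2
      · exact Or.inl (Or.inr (Or.inr (Or.inl h1)))
      · obtain ⟨M, _, hnz, _, _⟩ := h1
        obtain ⟨M', _, hSz', _, _⟩ := h2
        exact absurd hSz'.1 hnz
      · obtain ⟨M, hSx, hnz, hseg1, hcond1⟩ := h1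
        obtain ⟨M', hSy, hnz', hseg2, hcond2⟩ := h2
        obtain rfl : M = M' := by omega
        refine hcc M x y hSx hSy ?_ ?_
        · by_cases hpos : D.iseg z.1 + 1 = 4 * M + c
          · rw [if_pos hpos] at hcond1
            exact hnobad_Sp M x.1 y.1 hcond1
          · rw [if_neg hpos] at hcond1 hcond2
            rintro ⟨b1, b2, b3⟩
            exact hcond2 b3
        · by_cases hpos : D.iseg z.1 + 1 = 4 * M + c
          · rw [if_pos hpos] at hcond2
            exact hnobad_Sp M y.1 x.1 hcond2
          · rw [if_neg hpos] at hcond1 hcond2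
            rintro ⟨b1, b2, b3⟩
            exact hcond1 b3
      · obtain ⟨M, hSx, hnz, hseg1, hcond1⟩ := h1
        obtain ⟨i, hρ2⟩ := h2
        obtain ⟨hu, hv, _, _, _⟩ := hρ2
        have e1 : D.iseg y.1 = i := hu.2
        have e2 : D.iseg z.1 = i := hv.2
        refine Or.inl (Or.inr (Or.inr (Or.inl ⟨M, hSx, hu.1, ?_, ?_⟩)))
        · rw [e1, ← e2]; exact hseg1
        · rw [e1, ← e2]; exact hcond1
    · rcases h2 with rfl | h2 | h2 | h2
      · exact Or.inl (Or.inr (Or.inr (Or.inr h1)))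
      · obtain ⟨i, hρ1⟩ := h1
        obtain ⟨M', _, hSz', _, _⟩ := h2
        obtain ⟨_, hv, _, _, _⟩ := hρ1
        exact absurd hSz'.1 hv.1
      · obtain ⟨i, hρ1⟩ := h1
        obtain ⟨M', hSy, hnz, hseg2, hcond2⟩ := h2
        obtain ⟨hu, hv, _, _, _⟩ := hρ1
        have e1 : D.iseg x.1 = i := hu.2
        have e2 : D.iseg z.1 = i := hv.2
        refine Or.inr (Or.inr (Or.inr (Or.inl ⟨M', hSy, hu.1, ?_, ?_⟩)))
        · rw [e1, ← e2]; exact hseg2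
        · rw [e1, ← e2]; exact hcond2
      · obtain ⟨i, hρ1⟩ := h1
        obtain ⟨i', hρ2⟩ := h2
        have hii : i = i' := by
          obtain ⟨_, hv, _, _, _⟩ := hρ1
          obtain ⟨_, hv', _, _, _⟩ := hρ2
          rw [← hv.2, ← hv'.2]
        subst hii
        rcases ρdown i _ _ _ hρ1 hρ2 with h | h
        · exact Or.inl (Or.inr (Or.inr (Or.inr ⟨i, h⟩)))
        · exact Or.inr (Or.inr (Or.inr (Or.inr ⟨i, h⟩)))
  -- a non-crosser is never above a crosser
  have hlemix : ∀ (x σ : ↥Sb), ¬ D.Cross x.1 → D.Cross σ.1 → le x σ → False := by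
    intro x σ hnx hcσ h
    rcases h with rfl | h | h | h
    · exact hnx hcσ
    · obtain ⟨M, hSx, _, _, _⟩ := h
      exact hnx hSx.1
    · obtain ⟨M, hSx, _, _, _⟩ := h
      exact hnx hSx.1
    · obtain ⟨i, _, hv, _, _, _⟩ := h
      exact hv.1 hcσ
  -- extraction of the crosser/non-crosser clause
  have hlecn : ∀ (σ x : ↥Sb), D.Cross σ.1 → ¬ D.Cross x.1 → le σ x →
      ∃ M, D.Sig c M σ.1 ∧
        (4 * M + c ≤ D.iseg x.1 + 1 ∧ D.iseg x.1 + 1 ≤ 4 * M + c + 3) ∧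
        (if D.iseg x.1 + 1 = 4 * M + c
         then D.lv σ.1 ≤ D.brk (4 * M + c) ∧ D.brk (4 * M + c) ≤ D.rv σ.1
         else D.cls c M σ.1 ≠ 2) := by
    intro σ x hcσ hnx h
    rcases h with rfl | h | h | h
    · exact absurd hcσ hnx
    · obtain ⟨M, _, hSx, _, _⟩ := h
      exact absurd hSx.1 hnx
    · obtain ⟨M, hSσ, _, hseg, hcond⟩ := h
      exact ⟨M, hSσ, hseg, hcond⟩
    · obtain ⟨i, hu, _, _, _, _⟩ := h
      exact absurd hcσ hu.1
  -- chain bound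
  have hchain : ∀ s : Finset ↥Sb, (∀ u ∈ s, ∀ v ∈ s, le u v ∨ le v u) →
      s.card ≤ (k + 2) ^ 2 := by
    intro s hs
    have hsq : (k + 2) ^ 2 = (k + 1) ^ 2 + (2 * k + 3) := by ring
    have hsq1 : (k + 1) ^ 2 = k * k + 2 * k + 1 := by ring
    by_cases hex : ∃ x ∈ s, ¬ D.Cross x.1
    · obtain ⟨x, hxs, hxc⟩ := hex
      set i := D.iseg x.1 with hi
      set sR := s.filter (fun z => ¬ D.Cross z.1) with hsR
      set sC := s.filter (fun z => D.Cross z.1) with hsC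
      have hcards : sC.card + sR.card = s.card := by
        rw [hsR, hsC]
        exact Finset.card_filter_add_card_filter_not _
      have hxsR : x ∈ sR := Finset.mem_filter.2 ⟨hxs, hxc⟩
      have hRseg : ∀ z ∈ sR, z.1 ∈ Rs i := by
        intro z hz
        have hzs := Finset.mem_filter.1 hz
        have hznc : ¬ D.Cross z.1 := hzs.2
        by_cases hzx : z = x
        · subst hzx; exact ⟨hznc, rfl⟩
        · have hcomp := hs z hzs.1 x hxs
          rcases hcomp with h | h
          · rcases h with h | h | h | h
            · exact absurd h hzx
            · obtain ⟨M, hS, _, _, _⟩ := h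
              exact absurd hS.1 hznc
            · obtain ⟨M, hS, _, _, _⟩ := h
              exact absurd hS.1 hznc
            · obtain ⟨j, hu, hv, _, _, _⟩ := h
              have hji : j = i := by rw [hi, ← hv.2]
              exact hji ▸ hu
          · rcases h with h | h | h | h
            · exact absurd h.symm hzx
            · obtain ⟨M, hS, _, _, _⟩ := h
              exact absurd hS.1 hxc
            · obtain ⟨M, hS, _, _, _⟩ := h
              exact absurd hS.1 hxc
            · obtain ⟨j, hu, hv, _, _, _⟩ := h
              have hji : j = i := by rw [hi, ← hu.2]
              exact hji ▸ hv
      have hRρ : ∀ z ∈ sR, ∀ z' ∈ sR, z ≠ z' → ρ i z.1 z'.1 ∨ ρ i z'.1 z.1 := by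
        intro z hz z' hz' hne
        have hz1 := Finset.mem_filter.1 hz
        have hz1' := Finset.mem_filter.1 hz'
        have hext : ∀ (a a' : ↥Sb), a ∈ sR → a' ∈ sR → le a a' → a ≠ a' → ρ i a.1 a'.1 := by
          intro a a' ha ha' hle2 hne'
          have hanc := (Finset.mem_filter.1 ha).2
          rcases hle2 with h | h | h | h
          · exact absurd h hne'
          · obtain ⟨M, hS, _, _, _⟩ := h
            exact absurd hS.1 hanc
          · obtain ⟨M, hS, _, _, _⟩ := h
            exact absurd hS.1 hanc
          · obtain ⟨j, hρ0⟩ := h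
            have hji : j = i := by
              obtain ⟨hu, _, _, _, _⟩ := hρ0
              have hmem := hRseg a ha
              rw [← hu.2, ← hmem.2]
            exact hji ▸ hρ0
        rcases hs z hz1.1 z' hz1'.1 with h | h
        · exact Or.inl (hext z z' hz hz' h hne)
        · exact Or.inr (hext z' z hz' hz h hne.symm)
      have hRcard : sR.card ≤ (k + 1) ^ 2 := by
        set φ : {z // z ∈ sR} → ↥{y : ↥(Rs i) | g i y = b} :=
          fun z => ⟨⟨z.1.1, hRseg z.1 z.2⟩,
            hgb z.1.1 i (hRseg z.1 z.2) z.1.2⟩ with hφ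
        set t' : Finset ↥{y : ↥(Rs i) | g i y = b} := Finset.image φ sR.attach with ht'
        have hinj : ∀ (a : {z // z ∈ sR}) (a' : {z // z ∈ sR}), φ a = φ a' → a = a' := by
          intro a a' h
          have h2 : a.1.1 = a'.1.1 := congrArg (fun y => y.1.1) h
          exact Subtype.ext (Subtype.ext h2)
        have hcard_eq : t'.card = sR.card := by
          rw [ht']
          rw [Finset.card_image_of_injOn (fun a _ a' _ h => hinj a a' h)]
          exact Finset.card_attach
        have hpair : ∀ u ∈ t', ∀ v ∈ t', (Fo i b).le u v ∨ (Fo i b).le v u := by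
          intro u hu v hv
          obtain ⟨zu, _, rfl⟩ := Finset.mem_image.1 hu
          obtain ⟨zv, _, rfl⟩ := Finset.mem_image.1 hv
          by_cases hzz : zu = zv
          · subst hzz; exact Or.inl ((Fo i b).refl _)
          · have hne : zu.1 ≠ zv.1 := fun h => hzz (Subtype.ext h)
            rcases hRρ zu.1 zu.2 zv.1 zv.2 hne with h | h
            · obtain ⟨hu', hv', pu', pv', hF⟩ := h
              left
              rwa [ρirrel i _ hu' (hRseg zu.1 zu.2) pu' _,
                ρirrel i _ hv' (hRseg zv.1 zv.2) pv' _] at hF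
            · obtain ⟨hu', hv', pu', pv', hF⟩ := h
              right
              rwa [ρirrel i _ hu' (hRseg zv.1 zv.2) pu' _,
                ρirrel i _ hv' (hRseg zu.1 zu.2) pv' _] at hF
        have := hFchain i b t' hpair
        omega
      have hCcard : sC.card ≤ 2 * k + 3 := by
        rcases Finset.eq_empty_or_nonempty sC with he | ⟨σ0, hσ0⟩
        · rw [he]; simp
        · have hcn : ∀ σ ∈ sC, ∃ M, D.Sig c M σ.1 ∧
              (4 * M + c ≤ i + 1 ∧ i + 1 ≤ 4 * M + c + 3) ∧
              (if i + 1 = 4 * M + c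
               then D.lv σ.1 ≤ D.brk (4 * M + c) ∧ D.brk (4 * M + c) ≤ D.rv σ.1
               else D.cls c M σ.1 ≠ 2) := by
            intro σ hσ
            have hσ1 := Finset.mem_filter.1 hσ
            rcases hs σ hσ1.1 x hxs with h | h
            · exact hlecn σ x hσ1.2 hxc h
            · exact absurd h (fun hh => hlemix x σ hxc hσ1.2 hh)
          obtain ⟨M0, hS0, hseg0, hcond0⟩ := hcn σ0 hσ0
          by_cases hpos : i + 1 = 4 * M0 + c
          · have hmap : ∀ σ ∈ sC, σ.1 ∈ D.B (D.brk (4 * M0 + c)) := by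
              intro σ hσ
              obtain ⟨M, hS, hseg, hcond⟩ := hcn σ hσ
              obtain rfl : M = M0 := by omega
              rw [if_pos hpos] at hcond
              exact D.mem_iff.2 hcond
            have hle2 := Finset.card_le_card_of_injOn (fun z => z.1)
              (fun σ hσ => Finset.mem_coe.2 (hmap σ (Finset.mem_coe.1 hσ)))
              (fun a _ a' _ h => Subtype.ext h)
            have := D.card_le (D.brk (4 * M0 + c))
            omega
          · have hmap : ∀ σ ∈ sC,
                σ.1 ∈ D.B (D.brk (4 * M0 + c) + 1) ∪ D.B (D.brk (4 * M0 + c + 1)) := by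
              intro σ hσ
              obtain ⟨M, hS, hseg, hcond⟩ := hcn σ hσ
              obtain rfl : M = M0 := by omega
              rw [if_neg hpos] at hcond
              rcases D.cls_ne2_mem hS hcond with h | h
              · exact Finset.mem_union_left _ h
              · exact Finset.mem_union_right _ h
            have hle2 := Finset.card_le_card_of_injOn (fun z => z.1)
              (fun σ hσ => Finset.mem_coe.2 (hmap σ (Finset.mem_coe.1 hσ)))
              (fun a _ a' _ h => Subtype.ext h)
            have := D.card_pq (4 * M0 + c)
            omega
      omega
    · push_neg at hex
      rcases Finset.eq_empty_or_nonempty s with he | ⟨x0, hx0⟩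
      · rw [he]; simp
      · have hx0C := hex x0 hx0
        have hSx0 := mkSig x0.1 hx0C x0.2
        set M0 := D.Jx x0.1 / 4 with hM0
        have hall : ∀ z ∈ s, D.Sig c M0 z.1 := by
          intro z hz
          by_cases hzx : z = x0
          · subst hzx; exact hSx0
          · have hzC := hex z hz
            have hext : ∀ (a a' : ↥Sb), le a a' → D.Cross a.1 → D.Cross a'.1 →
                ∃ M, D.Sig c M a.1 ∧ D.Sig c M a'.1 := by
              intro a a' hle2 ha ha'
              rcases hle2 with h | h | h | h
              · subst h
                exact ⟨D.Jx a.1 / 4, mkSig a.1 ha a.2, mkSig a.1 ha a.2⟩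
              · obtain ⟨M, h1, h2, _, _⟩ := h
                exact ⟨M, h1, h2⟩
              · obtain ⟨M, _, hn, _, _⟩ := h
                exact absurd ha' hn
              · obtain ⟨j, hu, _, _, _, _⟩ := h
                exact absurd ha hu.1
            rcases hs z hz x0 hx0 with h | h
            · obtain ⟨M, h1, h2⟩ := hext z x0 h hzC hx0C
              obtain rfl : M = M0 := D.Sig_win_unique h2 hSx0
              exact h1
            · obtain ⟨M, h1, h2⟩ := hext x0 z h hx0C hzC
              obtain rfl : M = M0 := D.Sig_win_unique h1 hSx0
              exact h2
        have hmap : ∀ z ∈ s,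
            z.1 ∈ D.B (D.brk (4 * M0 + c)) ∪ D.B (D.brk (4 * M0 + c + 1)) := by
          intro z hz
          rcases D.Sig_mem_p_or_q (hall z hz) with h | h
          · exact Finset.mem_union_left _ (D.mem_iff.2 h)
          · exact Finset.mem_union_right _ (D.mem_iff.2 h)
        have hle2 := Finset.card_le_card_of_injOn (fun z => z.1)
              (fun σ hσ => Finset.mem_coe.2 (hmap σ (Finset.mem_coe.1 hσ)))
          (fun a _ a' _ h => Subtype.ext h)
        have h1 := D.card_le (D.brk (4 * M0 + c))
        have h2 := D.card_le (D.brk (4 * M0 + c + 1))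
        have h3 := Finset.card_union_le (D.B (D.brk (4 * M0 + c)))
          (D.B (D.brk (4 * M0 + c + 1)))
        omega
  -- edge coverage
  have hedge : ∀ x y : ↥Sb, (G.induce Sb).Adj x y → le x y ∨ le y x := by
    intro x y hxy
    have hG : G.Adj x.1 y.1 := hxy
    obtain ⟨t, ht1, ht2⟩ := D.edge _ _ hG
    have hx' := D.mem_iff.1 ht1
    have hy' := D.mem_iff.1 ht2
    by_cases hcx : D.Cross x.1 <;> by_cases hcy : D.Cross y.1
    · have hSx := mkSig x.1 hcx x.2
      have hSy := mkSig y.1 hcy y.2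
      have hMM : D.Jx x.1 / 4 = D.Jx y.1 / 4 :=
        D.overlap_win hSx hSy hx'.1 hx'.2 hy'.1 hy'.2
      rw [← hMM] at hSy
      exact hcc _ x y hSx hSy
        (hnobad_pt _ x.1 y.1 t hx'.1 hx'.2 hy'.1 hy'.2)
        (hnobad_pt _ y.1 x.1 t hy'.1 hy'.2 hx'.1 hx'.2)
    · have hSx := mkSig x.1 hcx x.2
      have hcm := D.cross_meets_seg hSx hcy hx'.1 hx'.2 hy'.1 hy'.2
      refine Or.inl (Or.inr (Or.inr (Or.inl ⟨_, hSx, hcy, hcm.1, ?_⟩)))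
      by_cases hpos : D.iseg y.1 + 1 = 4 * (D.Jx x.1 / 4) + c
      · rw [if_pos hpos]
        exact hcm.2.1 hpos
      · rw [if_neg hpos]
        exact hcm.2.2 hpos
    · have hSy := mkSig y.1 hcy y.2
      have hcm := D.cross_meets_seg hSy hcx hy'.1 hy'.2 hx'.1 hx'.2
      refine Or.inr (Or.inr (Or.inr (Or.inl ⟨_, hSy, hcx, hcm.1, ?_⟩)))
      by_cases hpos : D.iseg x.1 + 1 = 4 * (D.Jx y.1 / 4) + c
      · rw [if_pos hpos]
        exact hcm.2.1 hpos
      · rw [if_neg hpos]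
        exact hcm.2.2 hpos
    · have hseg := D.noncross_same_seg hcx hcy hx'.1 hx'.2 hy'.1 hy'.2
      have hxR : x.1 ∈ Rs (D.iseg x.1) := ⟨hcx, rfl⟩
      have hyR : y.1 ∈ Rs (D.iseg x.1) := ⟨hcy, hseg.symm⟩
      have px := hgb x.1 _ hxR x.2
      have py := hgb y.1 _ hyR y.2
      have hadj2 : ((G.induce (Rs (D.iseg x.1))).induce
          {z | g (D.iseg x.1) z = b}).Adj ⟨⟨x.1, hxR⟩, px⟩ ⟨⟨y.1, hyR⟩, py⟩ := hG
      rcases hFedge (D.iseg x.1) b _ _ hadj2 with h | h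
      · exact Or.inl (Or.inr (Or.inr (Or.inr ⟨_, hxR, hyR, px, py, h⟩)))
      · exact Or.inr (Or.inr (Or.inr (Or.inr ⟨_, hyR, hxR, py, px, h⟩)))
  exact ⟨⟨le, hrefl, hanti, htrans, hdown⟩, hchain, hedge⟩

end Step

theorem main : ∀ (w : ℕ) {V : Type u} (G : SimpleGraph V) (N : ℕ), PD G w N →
    ∃ f : V → Fin 2, ∀ b, treedepthLE (G.induce {v | f v = b}) ((w + 1) ^ 2) := by
  intro w
  induction w with
  | zero =>
    intro V G N D
    refine ⟨fun _ => 0, ?_⟩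
    intro b
    refine ⟨⟨fun x y => x = y, fun v => rfl, fun u v h1 _ => h1,
      fun u v w h1 h2 => h1.trans h2,
      fun u v w h1 h2 => Or.inl (h1.trans h2.symm)⟩, ?_, ?_⟩
    · intro s hsc
      have h1 : s.card ≤ 1 := by
        refine Finset.card_le_one.2 ?_
        intro a ha b' hb'
        rcases hsc a ha b' hb' with h | h
        · exact h
        · exact h.symm
      simpa using h1
    · intro u v huv
      exfalso
      have hG : G.Adj u.1 v.1 := huv
      obtain ⟨t, h1, h2⟩ := D.edge _ _ hG
      have hne : u.1 ≠ v.1 := G.ne_of_adj hG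
      have hsub : ({u.1, v.1} : Finset V) ⊆ D.B t := by
        intro z hz
        rcases Finset.mem_insert.1 hz with rfl | hz
        · exact h1
        · rw [Finset.mem_singleton.1 hz]
          exact h2
      have hcard := Finset.card_le_card hsub
      rw [Finset.card_insert_of_notMem (by simp [hne]), Finset.card_singleton] at hcard
      have := D.card_le t
      omega
  | succ k ih =>
    intro V G N D
    exact step G k N D (fun s D' => ih (G.induce s) N D')

theorem stmt3 {V : Type*} (G : SimpleGraph V) (w : ℕ) (hw : 1 ≤ w)
    (hpw : pathwidthLE G w) :
    ∃ f : V → Fin 2, ∀ b : Fin 2,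
      treedepthLE (G.induce {v | f v = b}) ((w + 3) ^ w) := by
  obtain ⟨n, B, ⟨hcov, hconv, hedge⟩, hcard⟩ := hpw
  set B' : ℕ → Finset V := fun t => if h : 1 ≤ t ∧ t ≤ n then B ⟨t - 1, by omega⟩ else ∅
    with hB'
  have hB'pos : ∀ (t : ℕ) (h : 1 ≤ t ∧ t ≤ n), B' t = B ⟨t - 1, by omega⟩ := by
    intro t h
    simp only [hB']
    exact dif_pos h
  have hB'neg : ∀ (t : ℕ), ¬(1 ≤ t ∧ t ≤ n) → B' t = ∅ := by
    intro t h
    simp only [hB']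
    exact dif_neg h
  have hB'bound : ∀ (v : V) (t : ℕ), v ∈ B' t → 1 ≤ t ∧ t ≤ n := by
    intro v t hv
    by_contra hb
    rw [hB'neg t hb] at hv
    simp at hv
  have D : PD G w n := by
    refine ⟨B', ?_, ?_, ?_, ?_, ?_⟩
    · intro v
      obtain ⟨i, hi⟩ := hcov v
      refine ⟨i.1 + 1, ?_⟩
      rw [hB'pos (i.1 + 1) (by omega)]
      have he : (⟨i.1 + 1 - 1, by omega⟩ : Fin n) = i := Fin.ext (by simp)
      rwa [he]
    · intro v s t r h1 h2 hs hr
      have hsb := hB'bound v s hs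
      have hrb := hB'bound v r hr
      have htb : 1 ≤ t ∧ t ≤ n := by omega
      rw [hB'pos s hsb] at hs
      rw [hB'pos r hrb] at hr
      rw [hB'pos t htb]
      exact hconv v ⟨s - 1, by omega⟩ ⟨t - 1, by omega⟩ ⟨r - 1, by omega⟩
        (by simp [Fin.le_def]; omega) (by simp [Fin.le_def]; omega) hs hr
    · intro u v huv
      obtain ⟨i, h1, h2⟩ := hedge u v huv
      have he : (⟨i.1 + 1 - 1, by omega⟩ : Fin n) = i := Fin.ext (by simp)
      refine ⟨i.1 + 1, ?_, ?_⟩ <;>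
        · rw [hB'pos (i.1 + 1) (by omega), he]
          first | exact h1 | exact h2
    · intro t
      by_cases hb : 1 ≤ t ∧ t ≤ n
      · rw [hB'pos t hb]
        exact hcard _
      · rw [hB'neg t hb]
        simp
    · exact hB'bound
  obtain ⟨f, hf⟩ := main w G n D
  refine ⟨f, fun b => treedepthLE_mono _ ?_ (hf b)⟩
  rcases Nat.lt_or_ge w 2 with h2 | h2
  · have hw1 : w = 1 := by omega
    subst hw1
    norm_num
  · calc (w + 1) ^ 2 ≤ (w + 3) ^ 2 := Nat.pow_le_pow_left (by omega) 2
      _ ≤ (w + 3) ^ w := Nat.pow_le_pow_right (by omega) h2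
end

section
/- For all integers h ≥ 1 and k ≥ 1, there is no (h−1)-colouring of C⟨h,k⟩ with defect k−1; that is, in any vertex colouring of C⟨h,k⟩ with h−1 colours, some monochromatic component contains a vertex of degree at least k within that component. -/
/-- Vertices of the complete `k`-ary tree of depth `h`: sequences over `Fin k`
of length `< h` (the root is the empty sequence). -/
def CVert (h k : ℕ) : Type := {l : List (Fin k) // l.length < h}

/-- `C⟨h,k⟩`, the closure of the complete `k`-ary tree of depth `h`:
two vertices are adjacent iff one is a strict ancestor (proper prefix)
of the other. -/
def Cgraph (h k : ℕ) : SimpleGraph (CVert h k) where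
  Adj a b := a ≠ b ∧ (a.1 <+: b.1 ∨ b.1 <+: a.1)
  symm := ⟨fun _ _ ⟨hne, hp⟩ => ⟨hne.symm, hp.symm⟩⟩
  loopless := ⟨fun _ ⟨hne, _⟩ => hne rfl⟩

instance (h k : ℕ) : DecidableEq (CVert h k) :=
  fun a b => decidable_of_iff (a.1 = b.1) Subtype.ext_iff.symm

/-- In any `(h-1)`-colouring of `C⟨h,k⟩`, some vertex has at least `k`
neighbours of its own colour; that is, some monochromatic component has a
vertex of degree at least `k` within that component. -/
theorem stmt6 (h k : ℕ) (hh : 1 ≤ h) (hk : 1 ≤ k)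
    (f : CVert h k → Fin (h - 1)) :
    ∃ (v : CVert h k) (S : Finset (CVert h k)),
      (∀ u ∈ S, (Cgraph h k).Adj v u ∧ f u = f v) ∧ k ≤ S.card := by
  by_contra hcon
  push_neg at hcon
  -- key lemma: the subtree below `v` of remaining depth `m` uses at least `m` colors
  have key : ∀ m (v : List (Fin k)), v.length + m ≤ h →
      ∃ S : Finset (Fin (h - 1)), m ≤ S.card ∧
        ∀ c ∈ S, ∃ w : CVert h k, v <+: w.1 ∧ f w = c := by
    intro m
    induction m with
    | zero => intro v _; exact ⟨∅, le_refl _, by simp⟩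
    | succ m ih =>
      intro v hlen
      have hv : v.length < h := by omega
      set vv : CVert h k := ⟨v, hv⟩ with hvv
      by_cases hav : ∃ i : Fin k, ∀ w : CVert h k, (v ++ [i]) <+: w.1 → f w ≠ f vv
      · obtain ⟨i, hi⟩ := hav
        obtain ⟨S, hcard, hS⟩ := ih (v ++ [i]) (by simp; omega)
        refine ⟨insert (f vv) S, ?_, ?_⟩
        · have hnm : f vv ∉ S := by
            intro hmem
            obtain ⟨w, hw, hfw⟩ := hS _ hmem
            exact hi w hw hfw
          rw [Finset.card_insert_of_notMem hnm]; omega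
        · intro c hc
          rcases Finset.mem_insert.mp hc with hc | hc
          · exact ⟨vv, List.prefix_refl v, hc.symm⟩
          · obtain ⟨w, hw, hfw⟩ := hS c hc
            exact ⟨w, (List.prefix_append v [i]).trans hw, hfw⟩
      · push_neg at hav
        choose w hw hfw using hav
        have hinj : Function.Injective w := by
          intro i j hij
          have hi := hw i
          have hj := hw j
          rw [hij] at hi
          rcases List.prefix_or_prefix_of_prefix hi hj with hp | hp
          · have heq := List.IsPrefix.eq_of_length hp (by simp)
            simpa using List.append_cancel_left heq
          · have heq := List.IsPrefix.eq_of_length hp (by simp)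
            simpa using (List.append_cancel_left heq).symm
        have hmem : ∀ u ∈ Finset.univ.image w,
            (Cgraph h k).Adj vv u ∧ f u = f vv := by
          intro u hu
          obtain ⟨i, _, rfl⟩ := Finset.mem_image.mp hu
          have hpre : v <+: (w i).1 := (List.prefix_append v [i]).trans (hw i)
          have hlen' : v.length < (w i).1.length := by
            have hle := (hw i).length_le
            simp at hle; omega
          refine ⟨⟨fun heq => ?_, Or.inl hpre⟩, hfw i⟩
          have : vv.1 = (w i).1 := congrArg Subtype.val heq
          rw [← this] at hlen'
          simp [hvv] at hlen'
        have hlt := hcon vv (Finset.univ.image w) hmem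
        have hcardk : (Finset.univ.image w).card = k := by
          rw [Finset.card_image_of_injective _ hinj, Finset.card_univ,
            Fintype.card_fin]
        omega
  obtain ⟨S, hcard, _⟩ := key h [] (by simp)
  have hle : S.card ≤ h - 1 := by
    calc S.card ≤ Finset.univ.card := Finset.card_le_univ S
    _ = h - 1 := by simp
  omega
end

section
/- For all integers h ≥ 1 and k ≥ 1, in any vertex colouring of C⟨h,k⟩ with h−1 colours, some monochromatic component has more than k vertices (i.e., there is no (h−1)-colouring with clustering k). -/
instance inst_s7 (h k : ℕ) : DecidableEq (CVert h k) := by unfold CVert; infer_instance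

/-- In any `(h-1)`-colouring of `C⟨h,k⟩`, some monochromatic component has
more than `k` vertices: there are more than `k` vertices all joined to a
common vertex `v` by walks whose vertices all have the colour of `v`. -/
theorem stmt7 (h k : ℕ) (hh : 1 ≤ h) (hk : 1 ≤ k)
    (f : CVert h k → Fin (h - 1)) :
    ∃ (v : CVert h k) (S : Finset (CVert h k)),
      (∀ u ∈ S, ∃ p : (Cgraph h k).Walk v u, ∀ x ∈ p.support, f x = f v) ∧
      k < S.card := by
  by_contra hcon
  push_neg at hcon
  have key : ∀ i, i ≤ h - 1 → ∃ (p : CVert h k) (T : Finset (Fin (h-1))),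
      p.1.length = i ∧ T.card = i ∧ ∀ u : CVert h k, p.1 <+: u.1 → f u ∉ T := by
    intro i
    induction i with
    | zero =>
      exact fun _ => ⟨⟨[], by simp; omega⟩, ∅, rfl, rfl, fun u _ => Finset.notMem_empty _⟩
    | succ n ih =>
      intro hn
      obtain ⟨p, T, hlen, hcard, hT⟩ := ih (by omega)
      have hfp : f p ∉ T := hT p (List.prefix_refl _)
      by_cases hall : ∀ j : Fin k, ∃ u : CVert h k, ((p.1 ++ [j]) <+: u.1 ∧
          ∃ w : (Cgraph h k).Walk p u, ∀ x ∈ w.support, f x = f p)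
      · exfalso
        choose u hu hw using hall
        have hlu : ∀ j, p.1.length < (u j).1.length := by
          intro j
          have := (hu j).length_le
          simpa using lt_of_lt_of_le (by simp) this
        have hinj : Function.Injective u := by
          intro a b hab
          obtain ⟨ta, hta⟩ := hu a
          obtain ⟨tb, htb⟩ := hu b
          rw [hab] at hta
          have h2 := hta.trans htb.symm
          rw [List.append_assoc, List.append_assoc] at h2
          have h3 := List.append_cancel_left h2
          simpa using congrArg (fun l => l.head?) h3
        set S : Finset (CVert h k) := insert p (Finset.image u Finset.univ) with hS
        have hpni : p ∉ Finset.image u Finset.univ := by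
          simp only [Finset.mem_image]
          rintro ⟨j, -, hj⟩
          have := hlu j
          rw [hj] at this
          omega
        have hcardS : S.card = k + 1 := by
          rw [hS, Finset.card_insert_of_notMem hpni,
            Finset.card_image_of_injective _ hinj]
          simp
        have := hcon p S ?_
        · omega
        · intro x hx
          rw [hS, Finset.mem_insert] at hx
          rcases hx with rfl | hx
          · exact ⟨SimpleGraph.Walk.nil, by simp⟩
          · obtain ⟨j, -, rfl⟩ := Finset.mem_image.mp hx
            exact hw j
      · rw [not_forall] at hall
        obtain ⟨j, hj⟩ := hall
        have hlt : (p.1 ++ [j]).length < h := by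
          simp [hlen]; omega
        refine ⟨⟨p.1 ++ [j], hlt⟩, insert (f p) T, by simp [hlen],
          by rw [Finset.card_insert_of_notMem hfp, hcard], ?_⟩
        intro v hpre
        have hpv : p.1 <+: v.1 := List.IsPrefix.trans ⟨[j], rfl⟩ hpre
        have hlv : p.1.length < v.1.length := by
          have := hpre.length_le
          simp only [List.length_append, List.length_singleton] at this
          omega
        rw [Finset.mem_insert]
        rintro (hfv | hfv)
        · -- v would be in p's monochromatic component
          have hne : p ≠ v := by
            intro hpv'
            rw [hpv'] at hlv
            omega
          have hadj : (Cgraph h k).Adj p v := (show p ≠ v ∧ (p.1 <+: v.1 ∨ v.1 <+: p.1) from ⟨hne, Or.inl hpv⟩)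
          refine hj ⟨v, hpre, SimpleGraph.Walk.cons hadj SimpleGraph.Walk.nil, ?_⟩
          intro x hx
          simp only [SimpleGraph.Walk.support_cons, SimpleGraph.Walk.support_nil,
            List.mem_cons, List.mem_singleton, List.not_mem_nil, or_false] at hx
          rcases hx with rfl | rfl
          · rfl
          · exact hfv
        · exact hT v hpv hfv
  obtain ⟨p, T, hlen, hcard, hT⟩ := key (h-1) le_rfl
  have hu : T = Finset.univ := Finset.eq_univ_of_card T (by simp [hcard])
  exact hT p (List.prefix_refl _) (hu ▸ Finset.mem_univ _)
end

section
/- For all integers h ≥ 2 and k ≥ 2, the weak closure W⟨h,k⟩ of the complete k-ary tree of depth h contains C⟨h,k−1⟩ as a minor. -/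
/-- `W⟨h,k⟩`, the weak closure of the complete `k`-ary tree of depth `h`:
each leaf is adjacent to each of its (strict) ancestors, and these are all
the edges. -/
def Wgraph (h k : ℕ) : SimpleGraph (CVert h k) where
  Adj a b := a ≠ b ∧
    ((a.1.length = h - 1 ∧ b.1 <+: a.1) ∨ (b.1.length = h - 1 ∧ a.1 <+: b.1))
  symm := ⟨fun _ _ ⟨hne, hp⟩ => ⟨hne.symm, hp.symm⟩⟩
  loopless := ⟨fun _ ⟨hne, _⟩ => hne rfl⟩

/-- `H` is a minor of `G`: there are pairwise disjoint nonempty connected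
branch sets in `G`, one for each vertex of `H`, with an edge of `G` between
the branch sets of any two adjacent vertices of `H`. -/
def IsMinorOf {α β : Type*} (H : SimpleGraph α) (G : SimpleGraph β) : Prop :=
  ∃ B : α → Set β,
    (∀ a, (B a).Nonempty) ∧
    (∀ a, (G.induce (B a)).Connected) ∧
    (∀ a b, a ≠ b → Disjoint (B a) (B b)) ∧
    (∀ a b, H.Adj a b → ∃ x ∈ B a, ∃ y ∈ B b, G.Adj x y)

lemma list_aux {α : Type*} (c : α) :
    ∀ (l₁ l₂ : List α), (∀ x ∈ l₁, x ≠ c) → (∀ x ∈ l₂, x ≠ c) →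
    ∀ m n : ℕ, l₁ ++ List.replicate m c = l₂ ++ List.replicate n c → l₁ = l₂ := by
  intro l₁
  induction l₁ with
  | nil =>
    intro l₂ _ h₂ m n he
    cases l₂ with
    | nil => rfl
    | cons y t =>
      exfalso
      have hy : y ∈ List.replicate m c := by
        have : y ∈ ([] : List α) ++ List.replicate m c := by rw [he]; simp
        simpa using this
      exact h₂ y (by simp) (List.eq_of_mem_replicate hy)
  | cons x t ih =>
    intro l₂ h₁ h₂ m n he
    cases l₂ with
    | nil =>
      exfalso
      have hx : x ∈ List.replicate n c := by
        have : x ∈ ([] : List α) ++ List.replicate n c := by rw [← he]; simp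
        simpa using this
      exact h₁ x (by simp) (List.eq_of_mem_replicate hx)
    | cons y s =>
      simp only [List.cons_append, List.cons.injEq] at he
      obtain ⟨hxy, he⟩ := he
      rw [hxy, ih s (fun z hz => h₁ z (by simp [hz])) (fun z hz => h₂ z (by simp [hz])) m n he]

theorem stmt8 (h k : ℕ) (hh : 2 ≤ h) (hk : 2 ≤ k) :
    IsMinorOf (Cgraph h (k - 1)) (Wgraph h k) := by
  have hk1 : k - 1 < k := by omega
  set c : Fin k := ⟨k - 1, hk1⟩ with hc
  set f : Fin (k - 1) → Fin k := Fin.castLE (by omega) with hf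
  have hfc : ∀ x : Fin (k - 1), f x ≠ c := by
    intro x hx
    have hv := congrArg Fin.val hx
    simp [hf, hc] at hv
    have := x.2
    omega
  have hmemne : ∀ (l : List (Fin (k-1))) (x : Fin k), x ∈ l.map f → x ≠ c := by
    intro l x hx
    obtain ⟨y, _, rfl⟩ := List.mem_map.1 hx
    exact hfc y
  set ι : CVert h (k - 1) → CVert h k := fun a => ⟨a.1.map f, by simpa using a.2⟩ with hι
  set L : CVert h (k - 1) → CVert h k := fun a =>
    ⟨a.1.map f ++ List.replicate (h - 1 - a.1.length) c, by
      have := a.2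
      simp only [List.length_append, List.length_map, List.length_replicate]
      omega⟩ with hL
  have hLlen : ∀ a, (L a).1.length = h - 1 := by
    intro a
    have := a.2
    simp only [hL, List.length_append, List.length_map, List.length_replicate]
    omega
  -- key injectivity fact
  have hinj : ∀ (a b : CVert h (k-1)) (m n : ℕ),
      a.1.map f ++ List.replicate m c = b.1.map f ++ List.replicate n c → a = b := by
    intro a b m n he
    have hmap := list_aux c _ _ (hmemne a.1) (hmemne b.1) m n he
    have : a.1 = b.1 := by
      have finj : Function.Injective f := Fin.castLE_injective _
      exact List.map_injective_iff.2 finj hmap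
    exact Subtype.ext this
  have hIota : ∀ a : CVert h (k-1), (ι a).1 = a.1.map f ++ List.replicate 0 c := by
    intro a; simp [hι]
  have hpre : ∀ a, (ι a).1 <+: (L a).1 := by
    intro a
    simp only [hι, hL]
    exact List.prefix_append _ _
  have hadjIL : ∀ a, ι a ≠ L a → (Wgraph h k).Adj (ι a) (L a) := by
    intro a hne
    exact ⟨hne, Or.inr ⟨hLlen a, hpre a⟩⟩
  refine ⟨fun a => {ι a, L a}, ?_, ?_, ?_, ?_⟩
  · intro a; exact ⟨ι a, by simp⟩
  · intro a
    rw [SimpleGraph.connected_iff]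
    refine ⟨?_, ⟨⟨ι a, by simp⟩⟩⟩
    intro x y
    by_cases hxy : (x : CVert h k) = (y : CVert h k)
    · obtain rfl : x = y := Subtype.ext hxy
      exact SimpleGraph.Reachable.refl _
    · have hx := x.2
      have hy := y.2
      simp only [Set.mem_insert_iff, Set.mem_singleton_iff] at hx hy
      rcases hx with hx | hx <;> rcases hy with hy | hy
      · exact absurd (hx.trans hy.symm) hxy
      · have hne : ι a ≠ L a := fun e => hxy (by rw [hx, hy, e])
        have hadj : ((Wgraph h k).induce {ι a, L a}).Adj x y := by
          show (Wgraph h k).Adj x.1 y.1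
          rw [hx, hy]; exact hadjIL a hne
        exact hadj.reachable
      · have hne : ι a ≠ L a := fun e => hxy (by rw [hx, hy]; exact e.symm)
        have hadj : ((Wgraph h k).induce {ι a, L a}).Adj x y := by
          show (Wgraph h k).Adj x.1 y.1
          rw [hx, hy]; exact (hadjIL a hne).symm
        exact hadj.reachable
      · exact absurd (hx.trans hy.symm) hxy
  · intro a b hab
    rw [Set.disjoint_left]
    intro x hxa hxb
    simp only [Set.mem_insert_iff, Set.mem_singleton_iff] at hxa hxb
    apply hab
    rcases hxa with rfl | rfl <;> rcases hxb with he | he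
    · exact hinj a b 0 0 (by rw [← hIota a, ← hIota b, he])
    · refine hinj a b 0 (h - 1 - b.1.length) ?_
      rw [← hIota a, he]
    · refine hinj a b (h - 1 - a.1.length) 0 ?_
      rw [← hIota b]; exact congrArg Subtype.val he
    · exact hinj a b _ _ (congrArg Subtype.val he)
  · intro a b hadj
    obtain ⟨hne, hp⟩ := hadj
    rcases hp with hp | hp
    · refine ⟨ι a, by simp, L b, by simp, ?_⟩
      have hne' : ι a ≠ L b := fun e => hne (hinj a b 0 _ (by rw [← hIota a, e]))
      refine ⟨hne', Or.inr ⟨hLlen b, ?_⟩⟩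
      exact (hp.map f).trans (hpre b)
    · refine ⟨L a, by simp, ι b, by simp, ?_⟩
      have hne' : L a ≠ ι b := fun e => hne (hinj a b _ 0 (by rw [← hIota b, ← e]))
      refine ⟨hne', Or.inl ⟨hLlen a, (hp.map f).trans (hpre a)⟩⟩
end

section
/- For all integers h ≥ 1, k ≥ 1, and every real d ≥ 0 with d ≤ k: if the graph C⟨h,k⟩ is fractionally t-colourable with defect d, then t ≥ h − (h−1)d/k. -/
def cvertEquiv (h k : ℕ) : CVert h k ≃ Σ p : Fin h, List.Vector (Fin k) p where
  toFun v := ⟨⟨v.1.length, v.2⟩, ⟨v.1, rfl⟩⟩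
  invFun σ := ⟨σ.2.1, by rw [σ.2.2]; exact σ.1.2⟩
  left_inv v := rfl
  right_inv := by
    rintro ⟨⟨p, hp⟩, ⟨l, hl⟩⟩
    simp only at hl
    subst hl
    rfl

instance (h k : ℕ) : Fintype (CVert h k) := Fintype.ofEquiv _ (cvertEquiv h k).symm

/-- the dual weight function -/
noncomputable def wt (N k : ℕ) (d : ℝ) (v : CVert (N+1) k) : ℝ :=
  (if v.1.length = N then 1 else 1 - d / k) * ((k : ℝ)⁻¹) ^ v.1.length

lemma wt_nonneg {N k : ℕ} {d : ℝ} (hk : 1 ≤ k) (hdk : d ≤ (k:ℝ)) (v : CVert (N+1) k) :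
    0 ≤ wt N k d v := by
  have hk0 : (0:ℝ) < k := by exact_mod_cast hk
  have h1 : (0:ℝ) ≤ 1 - d / k := by
    rw [sub_nonneg, div_le_one hk0]; exact hdk
  unfold wt
  apply mul_nonneg
  · split <;> [norm_num; exact h1]
  · positivity

lemma wt_le {N k : ℕ} {d : ℝ} (hk : 1 ≤ k) (hd0 : 0 ≤ d) (v : CVert (N+1) k) :
    wt N k d v ≤ ((k : ℝ)⁻¹) ^ v.1.length := by
  have hk0 : (0:ℝ) < k := by exact_mod_cast hk
  unfold wt
  have h2 : (0:ℝ) ≤ ((k:ℝ)⁻¹) ^ v.1.length := by positivity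
  nth_rewrite 2 [← one_mul (((k:ℝ)⁻¹) ^ v.1.length)]
  apply mul_le_mul_of_nonneg_right _ h2
  have : 0 ≤ d / k := div_nonneg hd0 hk0.le
  split <;> linarith

lemma inv_pow_le {k : ℕ} (hk : 1 ≤ k) {p q : ℕ} (hpq : p ≤ q) :
    ((k:ℝ)⁻¹) ^ q ≤ ((k:ℝ)⁻¹) ^ p := by
  have hk0 : (0:ℝ) < k := by exact_mod_cast hk
  apply pow_le_pow_of_le_one (by positivity) _ hpq
  rw [inv_le_one_iff₀]; right; exact_mod_cast hk

lemma kraft {N k : ℕ} (hk : 1 ≤ k) (A : Finset (CVert (N+1) k))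
    (hA : ∀ w ∈ A, ∀ w' ∈ A, w.1 <+: w'.1 → w = w') :
    ∑ w ∈ A, ((k : ℝ)⁻¹) ^ w.1.length ≤ 1 := by
  classical
  have hk0 : (0:ℝ) < k := by exact_mod_cast hk
  set L := List.Vector (Fin k) N with hL
  set T : CVert (N+1) k → Finset L :=
    fun w => Finset.univ.filter (fun l => w.1 <+: l.1) with hT
  have hcard : ∀ w : CVert (N+1) k, (k:ℕ) ^ (N - w.1.length) ≤ (T w).card := by
    intro w
    have hwN : w.1.length ≤ N := Nat.lt_succ_iff.mp w.2
    have hlen : ∀ s : List.Vector (Fin k) (N - w.1.length),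
        (w.1 ++ s.1).length = N := by
      intro s; rw [List.length_append, s.2]; omega
    calc (k:ℕ) ^ (N - w.1.length)
        = (Finset.univ : Finset (List.Vector (Fin k) (N - w.1.length))).card := by
          rw [Finset.card_univ, card_vector, Fintype.card_fin]
      _ ≤ (T w).card := by
          apply Finset.card_le_card_of_injOn (fun s => (⟨w.1 ++ s.1, hlen s⟩ : L))
          · intro s _
            simp only [hT, Finset.mem_coe, Finset.mem_filter, Finset.mem_univ, true_and, Set.mem_setOf_eq]
            exact Finset.mem_coe.mpr (Finset.mem_filter.mpr ⟨Finset.mem_univ (α := L) _, List.prefix_append _ _⟩)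
          · intro s _ s' _ hss
            apply Subtype.ext
            have := congrArg Subtype.val hss
            simpa using List.append_cancel_left this
  have hdisj : ∀ x ∈ A, ∀ y ∈ A, x ≠ y → Disjoint (T x) (T y) := by
    intro x hx y hy hxy
    rw [Finset.disjoint_left]
    intro l hlx hly
    simp only [hT, Finset.mem_filter, Finset.mem_univ, true_and] at hlx hly
    rcases List.prefix_or_prefix_of_prefix hlx hly with hp | hp
    · exact hxy (hA x hx y hy hp)
    · exact hxy ((hA y hy x hx hp).symm)
  have hsum : ∑ w ∈ A, (k:ℕ) ^ (N - w.1.length) ≤ k ^ N := by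
    calc ∑ w ∈ A, (k:ℕ) ^ (N - w.1.length)
        ≤ ∑ w ∈ A, (T w).card := Finset.sum_le_sum fun w _ => hcard w
      _ = (A.biUnion T).card := (Finset.card_biUnion hdisj).symm
      _ ≤ (Finset.univ : Finset L).card := Finset.card_le_card (Finset.subset_univ _)
      _ = k ^ N := by
          rw [Finset.card_univ]
          show Fintype.card (List.Vector (Fin k) N) = k ^ N
          rw [card_vector, Fintype.card_fin]
  have key : ∀ w : CVert (N+1) k,
      ((k:ℝ)⁻¹) ^ w.1.length = (k:ℝ) ^ (N - w.1.length) / (k:ℝ) ^ N := by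
    intro w
    have hwN : w.1.length ≤ N := Nat.lt_succ_iff.mp w.2
    have e : (k:ℝ) ^ N = (k:ℝ) ^ (N - w.1.length) * (k:ℝ) ^ w.1.length := by
      rw [← pow_add, Nat.sub_add_cancel hwN]
    rw [inv_pow, e, eq_div_iff (by positivity)]
    field_simp
  calc ∑ w ∈ A, ((k:ℝ)⁻¹) ^ w.1.length
      = (∑ w ∈ A, (k:ℝ) ^ (N - w.1.length)) / (k:ℝ) ^ N := by
        rw [Finset.sum_div]; exact Finset.sum_congr rfl fun w _ => key w
    _ ≤ ((k:ℝ) ^ N) / (k:ℝ) ^ N := by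
        gcongr
        exact_mod_cast hsum
    _ = 1 := div_self (by positivity)

open scoped Classical in
lemma classBound {N k : ℕ} {d : ℝ} (hk : 1 ≤ k) (hd0 : 0 ≤ d) (hdk : d ≤ (k:ℝ))
    (Y : Set (CVert (N+1) k))
    (hY : ∀ v ∈ Y, ∀ S : Finset (CVert (N+1) k),
      (∀ u ∈ S, u ∈ Y ∧ (Cgraph (N+1) k).Adj v u) → (S.card : ℝ) ≤ d) :
    ∑ v : CVert (N+1) k, (if v ∈ Y then wt N k d v else 0) ≤ 1 := by
  classical
  have hk0 : (0:ℝ) < k := by exact_mod_cast hk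
  have hlen' : ∀ (v : CVert (N+1) k) (n : ℕ), (v.1.take n).length < N+1 :=
    fun v n => lt_of_le_of_lt (by rw [List.length_take]; exact min_le_right _ _) v.2
  set tk : CVert (N+1) k → ℕ → CVert (N+1) k := fun v n => ⟨v.1.take n, hlen' v n⟩ with htk
  have hex : ∀ v : CVert (N+1) k, v ∈ Y → ∃ n, tk v n ∈ Y := by
    intro v hv
    refine ⟨v.1.length, ?_⟩
    have he : tk v v.1.length = v := Subtype.ext List.take_length
    rwa [he]
  set mu : CVert (N+1) k → CVert (N+1) k :=
    fun v => if hv : v ∈ Y then tk v (Nat.find (hex v hv)) else v with hmu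
  have hmuY : ∀ v, ∀ hv : v ∈ Y, mu v ∈ Y := by
    intro v hv
    simp only [hmu, dif_pos hv]
    exact Nat.find_spec (hex v hv)
  have hmupre : ∀ v, ∀ _ : v ∈ Y, (mu v).1 <+: v.1 := by
    intro v hv
    simp only [hmu, dif_pos hv]
    exact List.take_prefix _ _
  have hmumin : ∀ v, ∀ hv : v ∈ Y, ∀ u : CVert (N+1) k, u ∈ Y → u.1 <+: (mu v).1 → u = mu v := by
    intro v hv u hu hpre
    simp only [hmu, dif_pos hv] at hpre ⊢
    have h1 : u.1 <+: v.1 := hpre.trans (List.take_prefix _ _)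
    have h2 : u.1 = v.1.take u.1.length := List.prefix_iff_eq_take.mp h1
    have h3 : u = tk v u.1.length := Subtype.ext h2
    have h4 : Nat.find (hex v hv) ≤ u.1.length := Nat.find_min' (hex v hv) (h3 ▸ hu)
    have h5 : u.1.length ≤ Nat.find (hex v hv) := by
      have h6 := hpre.length_le
      rw [List.length_take] at h6
      omega
    have h7 : u.1.length = Nat.find (hex v hv) := le_antisymm h5 h4
    rw [h3, h7]
  set s : Finset (CVert (N+1) k) := Finset.univ.filter (· ∈ Y) with hs
  set A : Finset (CVert (N+1) k) := s.image mu with hA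
  have hmem : ∀ v ∈ s, v ∈ Y := fun v hv => (Finset.mem_filter.mp hv).2
  have hAY : ∀ w ∈ A, w ∈ Y := by
    intro w hw
    obtain ⟨v, hv, rfl⟩ := Finset.mem_image.mp hw
    exact hmuY v (hmem v hv)
  have hAanti : ∀ w ∈ A, ∀ w' ∈ A, w.1 <+: w'.1 → w = w' := by
    intro w hw w' hw' hpre
    obtain ⟨v', hv', rfl⟩ := Finset.mem_image.mp hw'
    exact hmumin v' (hmem v' hv') w (hAY w hw) hpre
  have hre : ∑ v : CVert (N+1) k, (if v ∈ Y then wt N k d v else 0)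
      = ∑ v ∈ s, wt N k d v := (Finset.sum_filter _ _).symm
  rw [hre, ← Finset.sum_fiberwise_of_maps_to (fun v hv => Finset.mem_image_of_mem mu hv) (wt N k d)]
  refine le_trans (Finset.sum_le_sum ?_) (kraft hk A hAanti)
  intro w hw
  set F := Finset.filter (fun v => mu v = w) s with hF
  have hFsub : ∀ v ∈ F, v ∈ Y ∧ w.1 <+: v.1 := by
    intro v hvF
    obtain ⟨hvs, hmv⟩ := Finset.mem_filter.mp hvF
    exact ⟨hmem v hvs, hmv ▸ hmupre v (hmem v hvs)⟩
  have hlt : ∀ v ∈ F.erase w, w.1.length + 1 ≤ v.1.length := by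
    intro v hv
    have h1 := hFsub v (Finset.mem_of_mem_erase hv)
    have hne : v ≠ w := Finset.ne_of_mem_erase hv
    have hle := h1.2.length_le
    rcases lt_or_eq_of_le hle with hcase | hcase
    · omega
    · exact absurd (Subtype.ext (h1.2.eq_of_length hcase)).symm hne
  have hSdef : ∀ u ∈ F.erase w, u ∈ Y ∧ (Cgraph (N+1) k).Adj w u := by
    intro u hu
    have hne : u ≠ w := Finset.ne_of_mem_erase hu
    have h1 := hFsub u (Finset.mem_of_mem_erase hu)
    exact ⟨h1.1, show w ≠ u ∧ _ from ⟨hne.symm, Or.inl h1.2⟩⟩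
  have hcardle : ((F.erase w).card : ℝ) ≤ d := hY w (hAY w hw) _ hSdef
  have hlenw : w.1.length ≤ N := Nat.lt_succ_iff.mp w.2
  have hwtv : ∀ v ∈ F.erase w, wt N k d v ≤ ((k:ℝ)⁻¹) ^ (w.1.length + 1) := fun v hv =>
    le_trans (wt_le hk hd0 v) (inv_pow_le hk (hlt v hv))
  have hsumS : ∑ v ∈ F.erase w, wt N k d v ≤ d * ((k:ℝ)⁻¹) ^ (w.1.length + 1) := by
    calc ∑ v ∈ F.erase w, wt N k d v
        ≤ ∑ _v ∈ F.erase w, ((k:ℝ)⁻¹) ^ (w.1.length + 1) := Finset.sum_le_sum hwtv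
      _ = ((F.erase w).card : ℝ) * ((k:ℝ)⁻¹) ^ (w.1.length + 1) := by
          rw [Finset.sum_const, nsmul_eq_mul]
      _ ≤ d * ((k:ℝ)⁻¹) ^ (w.1.length + 1) :=
          mul_le_mul_of_nonneg_right hcardle (by positivity)
  have hsplit : ∑ v ∈ F, wt N k d v ≤ wt N k d w + ∑ v ∈ F.erase w, wt N k d v := by
    by_cases hwF : w ∈ F
    · rw [← Finset.add_sum_erase F _ hwF]
    · rw [Finset.erase_eq_of_notMem hwF]
      have := wt_nonneg hk hdk w
      linarith
  by_cases hN : w.1.length = N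
  · have hempty : F.erase w = ∅ := by
      rw [Finset.eq_empty_iff_forall_notMem]
      intro v hv
      have h1 := hlt v hv
      have h2 : v.1.length ≤ N := Nat.lt_succ_iff.mp v.2
      omega
    have hwt : wt N k d w = ((k:ℝ)⁻¹) ^ w.1.length := by
      unfold wt; rw [if_pos hN, one_mul]
    rw [hempty] at hsplit
    simpa [hwt] using hsplit
  · have hwt : wt N k d w = (1 - d / k) * ((k:ℝ)⁻¹) ^ w.1.length := by
      unfold wt; rw [if_neg hN]
    have halg : (1 - d / k) * ((k:ℝ)⁻¹) ^ w.1.length + d * ((k:ℝ)⁻¹) ^ (w.1.length + 1)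
        = ((k:ℝ)⁻¹) ^ w.1.length := by
      rw [pow_succ, div_eq_mul_inv]
      ring
    calc ∑ v ∈ F, wt N k d v
        ≤ wt N k d w + ∑ v ∈ F.erase w, wt N k d v := hsplit
      _ ≤ (1 - d / k) * ((k:ℝ)⁻¹) ^ w.1.length + d * ((k:ℝ)⁻¹) ^ (w.1.length + 1) := by
          rw [hwt]; linarith
      _ = ((k:ℝ)⁻¹) ^ w.1.length := halg

lemma total {N k : ℕ} (hk : 1 ≤ k) (d : ℝ) :
    ∑ v : CVert (N+1) k, wt N k d v = ((N:ℝ) + 1) - N * (d / k) := by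
  classical
  have hk0 : (0:ℝ) < k := by exact_mod_cast hk
  have h1 : ∑ v : CVert (N+1) k, wt N k d v
      = ∑ σ : Σ p : Fin (N+1), List.Vector (Fin k) p,
          wt N k d ((cvertEquiv (N+1) k).symm σ) :=
    (Equiv.sum_comp (cvertEquiv (N+1) k).symm (wt N k d)).symm
  rw [h1, ← Finset.univ_sigma_univ, Finset.sum_sigma]
  have h2 : ∀ (p : Fin (N+1)) (l : List.Vector (Fin k) (p : ℕ)),
      wt N k d ((cvertEquiv (N+1) k).symm ⟨p, l⟩)
      = (if (p:ℕ) = N then 1 else 1 - d / k) * ((k:ℝ)⁻¹) ^ (p:ℕ) := by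
    intro p l
    show (if l.1.length = N then (1:ℝ) else 1 - d / k) * ((k:ℝ)⁻¹) ^ l.1.length = _
    rw [l.2]
  calc ∑ p : Fin (N+1), ∑ l : List.Vector (Fin k) (p:ℕ),
          wt N k d ((cvertEquiv (N+1) k).symm ⟨p, l⟩)
      = ∑ p : Fin (N+1), ((k:ℝ)^(p:ℕ) * ((k:ℝ)⁻¹)^(p:ℕ))
          * (if (p:ℕ) = N then (1:ℝ) else 1 - d / k) := by
        refine Finset.sum_congr rfl fun p _ => ?_
        rw [Finset.sum_congr rfl (fun l _ => h2 p l), Finset.sum_const, Finset.card_univ,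
          card_vector, Fintype.card_fin, nsmul_eq_mul]
        push_cast
        ring
    _ = ∑ p : Fin (N+1), (if (p:ℕ) = N then (1:ℝ) else 1 - d / k) := by
        refine Finset.sum_congr rfl fun p _ => ?_
        rw [← mul_pow, mul_inv_cancel₀ hk0.ne', one_pow, one_mul]
    _ = (N:ℝ) * (1 - d / k) + 1 := by
        rw [Fin.sum_univ_castSucc]
        have e1 : ∀ p : Fin N,
            (if ((p.castSucc : Fin (N+1)) : ℕ) = N then (1:ℝ) else 1 - d / k) = 1 - d / k := by
          intro p
          rw [if_neg]
          simpa using Nat.ne_of_lt p.2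
        rw [Finset.sum_congr rfl (fun p _ => e1 p), Finset.sum_const, Finset.card_univ,
          Fintype.card_fin, nsmul_eq_mul, Fin.val_last, if_pos rfl]
    _ = ((N:ℝ) + 1) - N * (d / k) := by ring


open scoped Classical in
/-- `G` is fractionally `t`-colourable with defect `d`: there are sets
`Y 1, …, Y s ⊆ V(G)` and weights `α i ∈ [0,1]` such that every component of
each `G[Y i]` has maximum degree at most `d` (i.e. every vertex of `Y i` has
at most `d` neighbours in `Y i`), `Σ α i ≤ t`, and every vertex is covered
with total weight at least 1. -/
def FracDefect {V : Type*} (G : SimpleGraph V) (t : ℝ) (d : ℝ) : Prop :=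
  ∃ (s : ℕ) (Y : Fin s → Set V) (α : Fin s → ℝ),
    (∀ i, 0 ≤ α i ∧ α i ≤ 1) ∧
    (∀ i, ∀ v ∈ Y i, ∀ S : Finset V,
      (∀ u ∈ S, u ∈ Y i ∧ G.Adj v u) → (S.card : ℝ) ≤ d) ∧
    (∑ i, α i) ≤ t ∧
    (∀ v : V, 1 ≤ ∑ i, if v ∈ Y i then α i else 0)

theorem stmt10 (h k : ℕ) (hh : 1 ≤ h) (hk : 1 ≤ k) (d t : ℝ)
    (hd0 : 0 ≤ d) (hdk : d ≤ (k : ℝ))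
    (hcol : FracDefect (Cgraph h k) t d) :
    (h : ℝ) - ((h : ℝ) - 1) * d / (k : ℝ) ≤ t := by
  obtain ⟨N, rfl⟩ : ∃ N, h = N + 1 := ⟨h - 1, by omega⟩
  classical
  obtain ⟨s, Y, α, hα, hdef, hsum, hcov⟩ := hcol
  have key : ∀ i, ∑ v : CVert (N+1) k, (if v ∈ Y i then wt N k d v else 0) ≤ 1 :=
    fun i => classBound hk hd0 hdk (Y i) (hdef i)
  have step1 : ((N:ℝ) + 1) - N * (d / k) ≤ ∑ i, α i := by
    calc ((N:ℝ) + 1) - N * (d / k)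
        = ∑ v : CVert (N+1) k, wt N k d v := (total hk d).symm
      _ ≤ ∑ v : CVert (N+1) k, (wt N k d v * ∑ i, if v ∈ Y i then α i else 0) := by
          refine Finset.sum_le_sum fun v _ => ?_
          nth_rewrite 1 [← mul_one (wt N k d v)]
          exact mul_le_mul_of_nonneg_left (hcov v) (wt_nonneg hk hdk v)
      _ = ∑ i, ∑ v : CVert (N+1) k, (α i * if v ∈ Y i then wt N k d v else 0) := by
          simp_rw [Finset.mul_sum]
          rw [Finset.sum_comm]
          refine Finset.sum_congr rfl fun i _ => Finset.sum_congr rfl fun v _ => ?_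
          split_ifs <;> ring
      _ ≤ ∑ i, α i := by
          refine Finset.sum_le_sum fun i _ => ?_
          rw [← Finset.mul_sum]
          calc α i * ∑ v : CVert (N+1) k, (if v ∈ Y i then wt N k d v else 0)
              ≤ α i * 1 := mul_le_mul_of_nonneg_left (key i) (hα i).1
            _ = α i := mul_one _
  have step2 : ((N:ℝ) + 1) - N * (d / k) ≤ t := le_trans step1 hsum
  push_cast
  have e : ((N:ℝ) + 1 - 1) * d / k = (N:ℝ) * (d / k) := by ring
  linarith [e ▸ step2]
end

section
/- For every integer h ≥ 1: for each real ε > 0 and every integer d ≥ 0 there exists k such that C⟨h,k⟩ is not fractionally (h−ε)-colourable with defect d. Consequently, the fractional defective chromatic number of the family {C⟨h,k⟩ : k ∈ ℕ} is at least h. -/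
open scoped Classical

lemma FracDefect.pullback {V V' : Type*} {G : SimpleGraph V} {G' : SimpleGraph V'}
    {t d : ℝ} (f : V' → V) (hf : Function.Injective f)
    (hadj : ∀ a b, G'.Adj a b → G.Adj (f a) (f b)) :
    FracDefect G t d → FracDefect G' t d := by
  rintro ⟨s, Y, α, hα, hdef, hsum, hcov⟩
  refine ⟨s, fun i => f ⁻¹' Y i, α, hα, ?_, hsum, fun v => ?_⟩
  · intro i v hv S hS
    have h1 : ((S.image f).card : ℝ) ≤ d := by
      refine hdef i (f v) hv (S.image f) ?_
      intro u hu
      simp only [Finset.mem_image] at hu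
      obtain ⟨a, ha, rfl⟩ := hu
      exact ⟨(hS a ha).1, hadj _ _ (hS a ha).2⟩
    rwa [Finset.card_image_of_injective _ hf] at h1
  · have := hcov (f v)
    simpa using this

lemma FracDefect.mono_t {V : Type*} {G : SimpleGraph V} {t t' d : ℝ} (h : FracDefect G t d)
    (ht : t ≤ t') : FracDefect G t' d := by
  obtain ⟨s, Y, α, hα, hdef, hsum, hcov⟩ := h
  exact ⟨s, Y, α, hα, hdef, hsum.trans ht, hcov⟩

lemma frac_mono_k {h k k' : ℕ} {t d : ℝ} (hkk' : k ≤ k') :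
    FracDefect (Cgraph h k') t d → FracDefect (Cgraph h k) t d := by
  apply FracDefect.pullback (fun v => ⟨v.1.map (Fin.castLE hkk'), by simpa using v.2⟩)
  · intro a b hab
    apply Subtype.ext
    have := congrArg Subtype.val hab
    simpa using List.map_injective_iff.2 (Fin.castLE_injective hkk') this
  · rintro a b (⟨hne, hp⟩ : _ ∧ _)
    refine (⟨fun hc => hne ?_, ?_⟩ : _ ∧ _)
    · apply Subtype.ext
      have := congrArg Subtype.val hc
      simpa using List.map_injective_iff.2 (Fin.castLE_injective hkk') this
    · rcases hp with hp | hp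
      · exact Or.inl (hp.map _)
      · exact Or.inr (hp.map _)

lemma frac_base {k d : ℕ} {t : ℝ} (ht : t < 1) : ¬ FracDefect (Cgraph 1 k) t d := by
  rintro ⟨s, Y, α, hα, hdef, hsum, hcov⟩
  have h1 := hcov ⟨[], by simp⟩
  have h2 : ∑ i, (if (⟨[], by simp⟩ : CVert 1 k) ∈ Y i then α i else 0) ≤ ∑ i, α i := by
    apply Finset.sum_le_sum
    intro i _
    split
    · exact le_refl _
    · exact (hα i).1
  have h3 := h1.trans ((Finset.sum_congr rfl fun i _ => by congr).trans_le h2)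
  linarith

lemma frac_step (n k d : ℕ) (hk : 1 ≤ k) (t δ : ℝ) (hδ0 : 0 < δ) (hδ1 : δ ≤ 1/2)
    (hkδ : (d : ℝ) * t ≤ (k : ℝ) * δ) :
    FracDefect (Cgraph (n+1) k) t d → FracDefect (Cgraph n k) ((t-1)/(1-δ)) d := by
  rintro ⟨s, Y, α, hα, hdef, hsum, hcov⟩
  have hδ' : (0:ℝ) < 1 - δ := by linarith
  have hne : (1:ℝ) - δ ≠ 0 := ne_of_gt hδ'
  set root : CVert (n+1) k := ⟨[], by simp⟩ with hroot
  set B : Fin s → Finset (Fin k) := fun i =>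
    Finset.univ.filter (fun c => ∃ v, v ∈ Y i ∧ ∃ l, v.1 = c :: l) with hBdef
  -- each class containing the root meets at most d child subtrees
  have hB : ∀ i, root ∈ Y i → ((B i).card : ℝ) ≤ d := by
    intro i hi
    let w : Fin k → CVert (n+1) k := fun c =>
      if hc : ∃ v, v ∈ Y i ∧ ∃ l, v.1 = c :: l then hc.choose else root
    have hw : ∀ c ∈ B i, (w c) ∈ Y i ∧ ∃ l, (w c).1 = c :: l := by
      intro c hc
      rw [hBdef] at hc
      simp only [Finset.mem_filter, Finset.mem_univ, true_and] at hc
      simp only [w, dif_pos hc]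
      exact hc.choose_spec
    have hinj : Set.InjOn w (B i) := by
      intro c1 h1 c2 h2 hw12
      obtain ⟨-, l1, hl1⟩ := hw c1 h1
      obtain ⟨-, l2, hl2⟩ := hw c2 h2
      have h12 : c1 :: l1 = c2 :: l2 := by rw [← hl1, ← hl2, hw12]
      injection h12
    have hcard : ((B i).image w).card = (B i).card :=
      Finset.card_image_of_injOn hinj
    have := hdef i root hi ((B i).image w) ?_
    · rwa [hcard] at this
    · intro u hu
      simp only [Finset.mem_image] at hu
      obtain ⟨c, hc, rfl⟩ := hu
      obtain ⟨hmem, l, hl⟩ := hw c hc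
      refine ⟨hmem, (⟨?_, Or.inl ?_⟩ : _ ∧ _)⟩
      · intro hcon
        have : root.1 = (w c).1 := by rw [hcon]
        rw [hl] at this
        simp [hroot] at this
      · rw [hl]; exact List.nil_prefix
  -- averaging over children
  set g : Fin k → ℝ := fun c => ∑ i, if root ∈ Y i ∧ c ∈ B i then α i else 0 with hgdef
  have hsum_g : ∑ c, g c ≤ (k : ℝ) * δ := by
    have e1 : ∑ c, g c = ∑ i, ∑ c, (if root ∈ Y i ∧ c ∈ B i then α i else 0) :=
      Finset.sum_comm
    have e2 : ∀ i : Fin s, ∑ c, (if root ∈ Y i ∧ c ∈ B i then α i else 0)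
        ≤ (d : ℝ) * α i := by
      intro i
      by_cases hi : root ∈ Y i
      · have : ∑ c, (if root ∈ Y i ∧ c ∈ B i then α i else 0)
            = ((B i).card : ℝ) * α i := by
          simp only [hi, true_and]
          rw [Finset.sum_ite_mem, Finset.univ_inter, Finset.sum_const, nsmul_eq_mul]
        rw [this]
        exact mul_le_mul_of_nonneg_right (hB i hi) (hα i).1
      · simp only [hi, false_and, if_false, Finset.sum_const_zero]
        exact mul_nonneg (by positivity) (hα i).1
    calc ∑ c, g c ≤ ∑ i, (d : ℝ) * α i := by rw [e1]; exact Finset.sum_le_sum fun i _ => e2 i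
      _ = (d : ℝ) * ∑ i, α i := by rw [Finset.mul_sum]
      _ ≤ (d : ℝ) * t := by
          apply mul_le_mul_of_nonneg_left hsum (by positivity)
      _ ≤ (k : ℝ) * δ := hkδ
  have hex : ∃ c : Fin k, g c ≤ δ := by
    by_contra hcon
    push_neg at hcon
    have : ∑ c : Fin k, δ < ∑ c, g c := by
      apply Finset.sum_lt_sum_of_nonempty
      · have : Nonempty (Fin k) := ⟨⟨0, hk⟩⟩
        exact Finset.univ_nonempty
      · intro c _; exact hcon c
    simp only [Finset.sum_const, Finset.card_univ, Fintype.card_fin, nsmul_eq_mul] at this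
    linarith
  obtain ⟨c, hc⟩ := hex
  -- the embedding of C(n,k) as the subtree rooted at child c
  set e : CVert n k → CVert (n+1) k := fun v => ⟨c :: v.1, by simpa using Nat.succ_lt_succ v.2⟩
    with hedef
  have he_inj : Function.Injective e := by
    intro a b hab
    apply Subtype.ext
    have := congrArg Subtype.val hab
    simpa [hedef] using this
  have he_adj : ∀ a b, (Cgraph n k).Adj a b → (Cgraph (n+1) k).Adj (e a) (e b) := by
    rintro a b (⟨hab, hp⟩ : _ ∧ _)
    refine (⟨fun hcon => hab (he_inj hcon), ?_⟩ : _ ∧ _)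
    rcases hp with hp | hp
    · exact Or.inl (by obtain ⟨tl, htl⟩ := hp; exact ⟨tl, by simp [hedef, ← htl]⟩)
    · exact Or.inr (by obtain ⟨tl, htl⟩ := hp; exact ⟨tl, by simp [hedef, ← htl]⟩)
  -- the core coverage estimate inside the chosen subtree
  have hcore : ∀ v : CVert n k,
      1 - δ ≤ ∑ i, (if root ∈ Y i then 0 else if e v ∈ Y i then α i else 0) := by
    intro v
    have h1 := hcov (e v)
    have hsplit : ∀ i : Fin s, (if e v ∈ Y i then α i else 0) =
        (if root ∈ Y i then (if e v ∈ Y i then α i else 0) else 0)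
        + (if root ∈ Y i then 0 else if e v ∈ Y i then α i else 0) := by
      intro i; by_cases hi : root ∈ Y i <;> simp [hi]
    rw [Finset.sum_congr rfl (fun i _ => hsplit i), Finset.sum_add_distrib] at h1
    have h2 : ∑ i, (if root ∈ Y i then (if e v ∈ Y i then α i else 0) else 0) ≤ δ := by
      refine le_trans (Finset.sum_le_sum (fun i _ => ?_)) hc
      show (if root ∈ Y i then (if e v ∈ Y i then α i else 0) else 0)
          ≤ (if root ∈ Y i ∧ c ∈ B i then α i else 0)
      by_cases hi : root ∈ Y i
      · by_cases hv : e v ∈ Y i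
        · have hcB : c ∈ B i := by
            rw [hBdef]
            simp only [Finset.mem_filter, Finset.mem_univ, true_and]
            exact ⟨e v, hv, v.1, rfl⟩
          simp [hi, hv, hcB]
        · simp only [hi, hv, if_true, if_false]
          split <;> [exact (hα i).1; exact le_refl 0]
      · simp only [hi, if_false]
        split <;> [exact (hα i).1; exact le_refl 0]
    linarith
  -- build the new fractional colouring of C(n,k)
  set Yb : Fin s → Set (CVert n k) := fun i => {v | root ∉ Y i ∧ e v ∈ Y i} with hYbdef
  set αb : Fin s → ℝ := fun i => (if root ∈ Y i then 0 else α i) / (2*(1-δ)) with hαbdef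
  set idx : Fin (s+s) → Fin s := fun j => Sum.elim id id (finSumFinEquiv.symm j) with hidxdef
  have hdouble : ∀ G : Fin s → ℝ, ∑ j : Fin (s+s), G (idx j) = (∑ i, G i) + (∑ i, G i) := by
    intro G
    rw [← Equiv.sum_comp finSumFinEquiv (fun j => G (idx j))]
    simp only [hidxdef, Equiv.symm_apply_apply, Fintype.sum_sum_type, Sum.elim_inl,
      Sum.elim_inr, id]
  have hC : (0:ℝ) < 2*(1-δ) := by linarith
  have hC1 : (1:ℝ) ≤ 2*(1-δ) := by linarith
  refine ⟨s+s, fun j => Yb (idx j), fun j => αb (idx j), ?_, ?_, ?_, ?_⟩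
  · intro j
    constructor
    · apply div_nonneg _ (le_of_lt hC)
      split
      · exact le_refl 0
      · exact (hα (idx j)).1
    · rw [hαbdef]
      apply div_le_one_of_le₀ _ (le_of_lt hC)
      refine le_trans ?_ hC1
      split
      · linarith
      · exact (hα (idx j)).2
  · intro j v hv S hS
    obtain ⟨hroot_not, hev⟩ := hv
    have h1 : ((S.image e).card : ℝ) ≤ d := by
      refine hdef (idx j) (e v) hev (S.image e) ?_
      intro u hu
      simp only [Finset.mem_image] at hu
      obtain ⟨a, ha, rfl⟩ := hu
      exact ⟨(hS a ha).1.2, he_adj _ _ (hS a ha).2⟩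
    rwa [Finset.card_image_of_injective _ he_inj] at h1
  · rw [hdouble αb]
    have h1 : 1 ≤ ∑ i, (if root ∈ Y i then α i else 0) := hcov root
    have h2 : ∑ i, (if root ∈ Y i then α i else 0) + ∑ i, (if root ∈ Y i then 0 else α i)
        = ∑ i, α i := by
      rw [← Finset.sum_add_distrib]
      apply Finset.sum_congr rfl
      intro i _; by_cases hi : root ∈ Y i <;> simp [hi]
    have h3 : ∑ i, (if root ∈ Y i then 0 else α i) ≤ t - 1 := by linarith
    have h4 : ∑ i, αb i + ∑ i, αb i
        = (∑ i, (if root ∈ Y i then 0 else α i)) / (1 - δ) := by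
      rw [← Finset.sum_add_distrib, Finset.sum_div]
      apply Finset.sum_congr rfl
      intro i _
      simp only [hαbdef]
      rw [← add_div, show ((if root ∈ Y i then 0 else α i)
        + (if root ∈ Y i then 0 else α i)) = 2 * (if root ∈ Y i then 0 else α i) by ring,
        mul_div_mul_left _ _ (two_ne_zero)]
    rw [h4]
    exact (div_le_div_iff_of_pos_right hδ').2 h3
  · intro v
    have hFeq : (∑ i, if v ∈ Yb i then αb i else 0)
        = (∑ i, (if root ∈ Y i then 0 else if e v ∈ Y i then α i else 0)) / (2*(1-δ)) := by
      rw [Finset.sum_div]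
      apply Finset.sum_congr rfl
      intro i _
      by_cases hi : root ∈ Y i
      · have hvn : v ∉ Yb i := fun hcon => hcon.1 hi
        simp [hvn, hi]
      · by_cases hv : e v ∈ Y i
        · have hvy : v ∈ Yb i := ⟨hi, hv⟩
          simp [hvy, hi, hv, hαbdef]
        · have hvn : v ∉ Yb i := fun hcon => hv hcon.2
          simp [hvn, hi, hv]
    have hgoal : (1:ℝ) ≤ (∑ i, if v ∈ Yb i then αb i else 0)
        + (∑ i, if v ∈ Yb i then αb i else 0) := by
      rw [hFeq, ← add_div, le_div_iff₀ hC]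
      linarith [hcore v]
    have hd2 : (∑ j : Fin (s+s), if v ∈ Yb (idx j) then αb (idx j) else 0)
        = (∑ i, if v ∈ Yb i then αb i else 0) + (∑ i, if v ∈ Yb i then αb i else 0) :=
      hdouble (fun i => if v ∈ Yb i then αb i else 0)
    have hfinal := hd2 ▸ hgoal
    convert hfinal using 3

lemma frac_main (h : ℕ) (hh : 1 ≤ h) :
    ∀ ε : ℝ, 0 < ε → ∀ d : ℕ, ∃ k : ℕ, 1 ≤ k ∧
      ¬ FracDefect (Cgraph h k) ((h : ℝ) - ε) (d : ℝ) := by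
  induction h, hh using Nat.le_induction with
  | base =>
    intro ε hε d
    refine ⟨1, le_refl 1, frac_base ?_⟩
    norm_num
    linarith
  | succ n hn IH =>
    intro ε hε d
    obtain ⟨k₀, hk₀1, hk₀⟩ := IH (ε/2) (by linarith) d
    have hn1 : (1:ℝ) ≤ (n:ℝ) := by exact_mod_cast hn
    set δ : ℝ := min (1/2) (ε/(2*(n:ℝ))) with hδdef
    have hδ0 : 0 < δ := lt_min (by norm_num) (by positivity)
    have hδ1 : δ ≤ 1/2 := min_le_left _ _
    have hδ2 : δ ≤ ε/(2*(n:ℝ)) := min_le_right _ _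
    have hδ' : (0:ℝ) < 1 - δ := by linarith
    set k := max k₀ (max 1 (⌈((d:ℝ)*((n:ℝ)+1))/δ⌉₊ + 1)) with hkdef
    have hk1 : 1 ≤ k := le_trans (le_max_left 1 _) (le_max_right k₀ _)
    refine ⟨k, hk1, fun hF => ?_⟩
    have hkc : ((d:ℝ)*((n:ℝ)+1))/δ ≤ (k:ℝ) := by
      calc ((d:ℝ)*((n:ℝ)+1))/δ ≤ (⌈((d:ℝ)*((n:ℝ)+1))/δ⌉₊ : ℝ) := Nat.le_ceil _
        _ ≤ (k:ℝ) := by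
          have h1 : ⌈((d:ℝ)*((n:ℝ)+1))/δ⌉₊ ≤ k :=
            le_trans (Nat.le_succ _) (le_trans (le_max_right 1 _) (le_max_right k₀ _))
          exact_mod_cast h1
    have hkδ : (d:ℝ) * ((↑(n+1):ℝ) - ε) ≤ (k:ℝ) * δ := by
      push_cast
      have h1 : (d:ℝ) * ((n:ℝ)+1-ε) ≤ (d:ℝ)*((n:ℝ)+1) :=
        mul_le_mul_of_nonneg_left (by linarith) (by positivity)
      have h2 : (d:ℝ)*((n:ℝ)+1) ≤ (k:ℝ)*δ := by
        rw [div_le_iff₀ hδ0] at hkc; linarith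
      linarith
    have hstep := frac_step n k d hk1 ((↑(n+1):ℝ) - ε) δ hδ0 hδ1 hkδ hF
    have hprod : δ * (2*(n:ℝ)) ≤ ε := by
      rw [← le_div_iff₀ (by positivity)]
      exact hδ2
    have hle : ((↑(n+1):ℝ) - ε - 1)/(1-δ) ≤ (n:ℝ) - ε/2 := by
      rw [div_le_iff₀ hδ']
      push_cast
      nlinarith [mul_nonneg hδ0.le hε.le]
    exact hk₀ ((frac_mono_k (le_max_left k₀ _) hstep).mono_t hle)


/-- For each `ε > 0` and defect `d` there is `k` such that `C⟨h,k⟩` is not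
fractionally `(h-ε)`-colourable with defect `d`; consequently the fractional
defective chromatic number of the family `{C⟨h,k⟩ : k ∈ ℕ}` is at least `h`. -/
theorem stmt11 (h : ℕ) (hh : 1 ≤ h) :
    (∀ ε : ℝ, 0 < ε → ∀ d : ℕ, ∃ k : ℕ, 1 ≤ k ∧
      ¬ FracDefect (Cgraph h k) ((h : ℝ) - ε) (d : ℝ)) ∧
    (∀ t : ℝ, (∃ d : ℕ, ∀ k : ℕ, FracDefect (Cgraph h k) t (d : ℝ)) →
      (h : ℝ) ≤ t) := by
  constructor
  · exact frac_main h hh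
  · rintro t ⟨d, hd⟩
    by_contra hlt
    push_neg at hlt
    obtain ⟨k, hk1, hk⟩ := frac_main h hh ((h:ℝ) - t) (by linarith) d
    apply hk
    have he : (h:ℝ) - ((h:ℝ) - t) = t := by ring
    rw [he]
    exact hd k
end

section
/- For all h ≥ 1 and k ≥ 1, the complete bipartite graph K_{h,k} is a subgraph of C⟨h+1,k⟩. In particular, K_{4,2g+3} ⊆ C⟨4,2g+3⟩ for every g ≥ 0. -/
/-- `K_{h,k}` is a subgraph of `C⟨h+1,k⟩`: there is an injective graph
homomorphism from the complete bipartite graph with parts of sizes `h` and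
`k` into `C⟨h+1,k⟩`. In particular `K_{4,2g+3} ⊆ C⟨4,2g+3⟩` for all `g ≥ 0`. -/
theorem stmt16 (h k : ℕ) (hh : 1 ≤ h) (hk : 1 ≤ k) :
    ∃ φ : (Fin h ⊕ Fin k) → CVert (h + 1) k, Function.Injective φ ∧
      ∀ a b, (completeBipartiteGraph (Fin h) (Fin k)).Adj a b →
        (Cgraph (h + 1) k).Adj (φ a) (φ b) := by
  have z : Fin k := ⟨0, hk⟩
  refine ⟨fun x => match x with
    | .inl i => ⟨List.replicate i z, by simp⟩
    | .inr j => ⟨List.replicate (h-1) z ++ [j], by simp; omega⟩, ?_, ?_⟩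
  · rintro (i | i) (j | j) hij
    · have := congrArg (fun l : CVert (h+1) k => l.1.length) hij
      simp at this
      exact congrArg Sum.inl (Fin.ext this)
    · have := congrArg (fun l : CVert (h+1) k => l.1.length) hij
      simp at this; omega
    · have := congrArg (fun l : CVert (h+1) k => l.1.length) hij
      simp at this; omega
    · have := congrArg (fun l : CVert (h+1) k => l.1.getLast?) hij
      simp at this
      exact congrArg Sum.inr this
  · have key : ∀ (i : Fin h) (j : Fin k),
        (Cgraph (h + 1) k).Adj ⟨List.replicate i z, by simp⟩
          ⟨List.replicate (h-1) z ++ [j], by simp; omega⟩ := by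
      intro i j
      refine And.intro ?_ ?_
      · intro he
        have := congrArg (fun l : CVert (h+1) k => l.1.length) he
        simp at this; omega
      · left
        refine ⟨List.replicate (h - 1 - i) z ++ [j], ?_⟩
        show List.replicate (i:ℕ) z ++ _ = _
        rw [← List.append_assoc, ← List.replicate_add]
        congr 2
        omega
    rintro (i | i) (j | j) hadj <;> simp at hadj
    · exact key i j
    · exact ((Cgraph (h+1) k).adj_symm (key j i))
end
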